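/- arXiv:1206.6918 — 2 statements merged into one kernel-verified Lean document; each statement's English description precedes it below -/
import Mathlib

section
/- Closed form for the expected logarithm of a sum of two independent exponentially weighted terms: for all reals a, b > 0 with a ≠ b, ∫₀^∞ ∫₀^∞ ln(1 + a·s + b·t)·e^{-s}·e^{-t} ds dt = (a·e^{1/a}·E1(1/a) − b·e^{1/b}·E1(1/b)) / (a − b). Equivalently, if X and Y are independent exponential random variables with mean 1, then E[ln(1 + a·X + b·Y)] = (a·e^{1/a}·E1(1/a) − b·e^{1/b}·E1(1/b))/(a − b). -/
open MeasureTheory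

noncomputable section

/-- The exponential integral `E1(x) = ∫_x^∞ e^{-q}/q dq`. -/
def expInt (x : ℝ) : ℝ := ∫ q in Set.Ioi x, Real.exp (-q) / q

open Set Real Filter

-- shift lemma on Ioi
lemma integral_comp_add_right_Ioi (f : ℝ → ℝ) (c d : ℝ) :
    (∫ x in Ioi c, f (x + d)) = ∫ x in Ioi (c + d), f x := by
  rw [← integral_indicator measurableSet_Ioi, ← integral_indicator measurableSet_Ioi]
  rw [← integral_add_right_eq_self (fun x => (Ioi (c+d)).indicator f x) d]
  congr 1
  ext x
  simp only [indicator]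
  by_cases h : x ∈ Ioi c
  · rw [if_pos h, if_pos (by simpa [add_lt_add_iff_right] using h)]
  · rw [if_neg h, if_neg (by simpa [add_lt_add_iff_right] using h)]

lemma integrableOn_expInt_aux {x : ℝ} (hx : 0 < x) :
    IntegrableOn (fun q => Real.exp (-q) / q) (Ioi x) := by
  have h := exp_neg_integrableOn_Ioi x (b := 1) one_pos
  refine (h.const_mul x⁻¹).mono' ?_ ?_
  · apply ((measurable_exp.comp measurable_neg).div measurable_id).aestronglyMeasurable
  · filter_upwards [ae_restrict_mem measurableSet_Ioi] with q hq
    have hq0 : 0 < q := hx.trans hq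
    rw [Real.norm_eq_abs, abs_of_nonneg (by positivity), neg_one_mul]
    calc Real.exp (-q) / q ≤ Real.exp (-q) / x :=
      div_le_div_of_nonneg_left (exp_pos _).le hx hq.le
    _ = x⁻¹ * Real.exp (-q) := by rw [div_eq_inv_mul]

lemma expInt_nonneg {x : ℝ} (hx : 0 < x) : 0 ≤ expInt x := by
  apply setIntegral_nonneg measurableSet_Ioi
  intro q hq
  have : 0 < q := hx.trans hq
  positivity

lemma expInt_le {x : ℝ} (hx : 0 < x) : expInt x ≤ Real.exp (-x) / x := by
  have hi : IntegrableOn (fun q => Real.exp (-q) / x) (Ioi x) := by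
    simpa [neg_one_mul, IntegrableOn] using (exp_neg_integrableOn_Ioi x one_pos).div_const x
  have h1 : expInt x ≤ ∫ q in Ioi x, Real.exp (-q) / x := by
    apply setIntegral_mono_on (integrableOn_expInt_aux hx) hi measurableSet_Ioi
    intro q hq
    exact div_le_div_of_nonneg_left (exp_pos _).le hx hq.le
  calc expInt x ≤ ∫ q in Ioi x, Real.exp (-q) / x := h1
  _ = (∫ q in Ioi x, Real.exp (-q)) / x := by rw [integral_div]
  _ = Real.exp (-x) / x := by rw [integral_exp_neg_Ioi]


-- L3: ∫_{Ioi 0} e^{-t}/(t+m) dt = e^m * expInt m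
lemma integral_exp_div_add (m : ℝ) (hm : 0 < m) :
    (∫ t in Ioi (0:ℝ), Real.exp (-t) / (t + m)) = Real.exp m * expInt m := by
  have h1 : (∫ t in Ioi (0:ℝ), Real.exp (-t) / (t + m))
      = ∫ t in Ioi (0:ℝ), Real.exp m * (Real.exp (-(t+m)) / (t+m)) := by
    apply setIntegral_congr_fun measurableSet_Ioi
    intro t _
    dsimp only
    rw [← mul_div_assoc, ← Real.exp_add]
    congr 2
    ring
  rw [h1, integral_const_mul, integral_comp_add_right_Ioi (fun u => Real.exp (-u) / u) 0 m,
    zero_add]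
  rfl

-- L4: ∫_{Ioi p} e^{-c u}/u du = expInt (c p)
lemma integral_exp_mul_div (c p : ℝ) (hc : 0 < c) (hp : 0 < p) :
    (∫ u in Ioi p, Real.exp (-(c * u)) / u) = expInt (c * p) := by
  have h1 : (∫ u in Ioi p, Real.exp (-(c * u)) / u)
      = ∫ u in Ioi p, c • (Real.exp (-(c * u)) / (c * u)) := by
    apply setIntegral_congr_fun measurableSet_Ioi
    intro u hu
    have hu0 : 0 < u := hp.trans hu
    dsimp only
    rw [smul_eq_mul]
    field_simp
  rw [h1, integral_smul, integral_comp_mul_left_Ioi (fun v => Real.exp (-v) / v) p hc,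
    smul_smul, mul_inv_cancel₀ hc.ne', one_smul]
  rfl

-- L5: ∫_{Ioi 0} e^{-t}/(K + c t) dt = (1/c) e^{K/c} expInt (K/c)
lemma integral_exp_div_linear (K c : ℝ) (hK : 0 < K) (hc : 0 < c) :
    (∫ t in Ioi (0:ℝ), Real.exp (-t) / (K + c * t))
      = (1/c) * (Real.exp (K/c) * expInt (K/c)) := by
  have h1 : (∫ t in Ioi (0:ℝ), Real.exp (-t) / (K + c * t))
      = ∫ t in Ioi (0:ℝ), (1/c) * (Real.exp (-t) / (t + K/c)) := by
    apply setIntegral_congr_fun measurableSet_Ioi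
    intro t ht
    have h0 : K + c * t ≠ 0 := by have := ht.out; positivity
    have hc' : c ≠ 0 := hc.ne'
    dsimp only
    have h2 : t + K / c = (K + c * t) / c := by field_simp; ring
    rw [h2, div_div_eq_mul_div]
    field_simp
  rw [h1, integral_const_mul, integral_exp_div_add _ (by positivity)]

-- integrability of (K + c t) e^{-t}
lemma integrableOn_linear_mul_exp (K c : ℝ) :
    IntegrableOn (fun t => (K + c * t) * Real.exp (-t)) (Ioi (0:ℝ)) := by
  have h1 : IntegrableOn (fun t : ℝ => Real.exp (-t) * t) (Ioi (0:ℝ)) := by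
    have := Real.GammaIntegral_convergent (s := 2) (by norm_num)
    apply this.congr_fun ?_ measurableSet_Ioi
    intro t ht
    norm_num
  have h2 : IntegrableOn (fun t : ℝ => Real.exp (-t)) (Ioi (0:ℝ)) := by
    simpa [neg_one_mul] using exp_neg_integrableOn_Ioi (0:ℝ) (b:=1) one_pos
  have h3 : IntegrableOn (fun t : ℝ => K * Real.exp (-t) + c * (Real.exp (-t) * t))
      (Ioi (0:ℝ)) := by exact (h2.const_mul K).add (h1.const_mul c)
  exact h3.congr_fun (fun t _ => by ring) measurableSet_Ioi

lemma integrableOn_log_linear_mul_exp (K c : ℝ) (hK : 1 ≤ K) (hc : 0 < c) :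
    IntegrableOn (fun t => Real.log (K + c * t) * Real.exp (-t)) (Ioi (0:ℝ)) := by
  apply (integrableOn_linear_mul_exp K c).mono'
  · apply AEStronglyMeasurable.mul ?_ (measurable_exp.comp measurable_neg).aestronglyMeasurable
    apply Measurable.aestronglyMeasurable
    exact Real.measurable_log.comp (measurable_const.add (measurable_id.const_mul c))
  · filter_upwards [ae_restrict_mem measurableSet_Ioi] with t ht
    have h1 : (1:ℝ) ≤ K + c * t := by nlinarith [ht.out]
    rw [norm_mul, Real.norm_eq_abs, Real.norm_eq_abs, abs_of_nonneg (Real.log_nonneg h1),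
      abs_of_nonneg (exp_pos _).le]
    apply mul_le_mul_of_nonneg_right _ (exp_pos _).le
    exact (Real.log_le_sub_one_of_pos (by linarith)).trans (by linarith)

lemma integrableOn_exp_div_linear (K c : ℝ) (hK : 0 < K) (hc : 0 < c) :
    IntegrableOn (fun t => c * Real.exp (-t) / (K + c * t)) (Ioi (0:ℝ)) := by
  have h2 : IntegrableOn (fun t : ℝ => Real.exp (-t)) (Ioi (0:ℝ)) := by
    simpa [neg_one_mul] using exp_neg_integrableOn_Ioi (0:ℝ) (b:=1) one_pos
  apply (h2.const_mul (c/K)).mono'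
  · apply Measurable.aestronglyMeasurable
    exact ((measurable_exp.comp measurable_neg).const_mul c).div
      (measurable_const.add (measurable_id.const_mul c))
  · filter_upwards [ae_restrict_mem measurableSet_Ioi] with t ht
    have ht0 : 0 < t := ht.out
    have h0 : 0 < K + c * t := by positivity
    rw [Real.norm_eq_abs, abs_of_nonneg (by positivity)]
    rw [div_le_iff₀ h0]
    calc c * Real.exp (-t) = c / K * Real.exp (-t) * K := by field_simp
    _ ≤ c / K * Real.exp (-t) * (K + c * t) := by
        apply mul_le_mul_of_nonneg_left (by nlinarith) (by positivity)

-- L7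
lemma integral_log_linear_mul_exp (K c : ℝ) (hK : 1 ≤ K) (hc : 0 < c) :
    (∫ t in Ioi (0:ℝ), Real.log (K + c * t) * Real.exp (-t))
      = Real.log K + Real.exp (K/c) * expInt (K/c) := by
  have hK0 : 0 < K := lt_of_lt_of_le one_pos hK
  set F : ℝ → ℝ := fun t => -(Real.exp (-t) * Real.log (K + c * t)) with hF
  set f' : ℝ → ℝ := fun t => Real.log (K + c * t) * Real.exp (-t)
      - c * Real.exp (-t) / (K + c * t) with hf'
  have hderiv : ∀ t ∈ Ici (0:ℝ), HasDerivAt F (f' t) t := by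
    intro t ht
    have hpos : 0 < K + c * t := by nlinarith [ht.out]
    have he : HasDerivAt (fun t : ℝ => Real.exp (-t)) (-Real.exp (-t)) t := by
      simpa [Function.comp_def] using (Real.hasDerivAt_exp (-t)).comp t ((hasDerivAt_id t).neg)
    have hlin : HasDerivAt (fun t : ℝ => K + c * t) c t := by
      simpa using ((hasDerivAt_id t).const_mul c).const_add K
    have hl : HasDerivAt (fun t : ℝ => Real.log (K + c * t)) (c / (K + c * t)) t := by
      simpa using hlin.log hpos.ne'
    have := (he.mul hl).neg
    refine HasDerivAt.congr_deriv this ?_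
    rw [hf']
    field_simp
    ring
  have hf'int : IntegrableOn f' (Ioi (0:ℝ)) :=
    (integrableOn_log_linear_mul_exp K c hK hc).sub (integrableOn_exp_div_linear K c hK0 hc)
  have htend : Tendsto F atTop (nhds 0) := by
    have hb : Tendsto (fun t : ℝ => (K + c * t) * Real.exp (-t)) atTop (nhds 0) := by
      have h1 : Tendsto (fun t : ℝ => t * Real.exp (-t)) atTop (nhds 0) := by
        simpa using tendsto_pow_mul_exp_neg_atTop_nhds_zero 1
      have h2 : Tendsto (fun t : ℝ => Real.exp (-t)) atTop (nhds 0) := by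
        simpa using Real.tendsto_exp_neg_atTop_nhds_zero
      have := (h2.const_mul K).add (h1.const_mul c)
      simpa [mul_add, add_mul, mul_assoc, mul_comm, mul_left_comm] using this
    apply squeeze_zero_norm' _ hb
    filter_upwards [eventually_ge_atTop (0:ℝ)] with t ht
    have h1 : (1:ℝ) ≤ K + c * t := by nlinarith
    rw [hF, norm_neg, norm_mul, Real.norm_eq_abs, Real.norm_eq_abs,
      abs_of_nonneg (exp_pos _).le, abs_of_nonneg (Real.log_nonneg h1)]
    rw [mul_comm]
    apply mul_le_mul_of_nonneg_right _ (exp_pos _).le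
    exact (Real.log_le_sub_one_of_pos (by linarith)).trans (by linarith)
  have key := integral_Ioi_of_hasDerivAt_of_tendsto' hderiv hf'int htend
  have hF0 : F 0 = -Real.log K := by simp [hF]
  rw [hF0] at key
  have hsub : (∫ t in Ioi (0:ℝ), f' t)
      = (∫ t in Ioi (0:ℝ), Real.log (K + c * t) * Real.exp (-t))
        - ∫ t in Ioi (0:ℝ), c * Real.exp (-t) / (K + c * t) := by
    rw [hf']
    exact integral_sub (integrableOn_log_linear_mul_exp K c hK hc)
      (integrableOn_exp_div_linear K c hK0 hc)
  have hdiv : (∫ t in Ioi (0:ℝ), c * Real.exp (-t) / (K + c * t))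
      = Real.exp (K/c) * expInt (K/c) := by
    have : (∫ t in Ioi (0:ℝ), c * Real.exp (-t) / (K + c * t))
        = c * ∫ t in Ioi (0:ℝ), Real.exp (-t) / (K + c * t) := by
      rw [← integral_const_mul]
      congr 1; ext t; ring
    rw [this, integral_exp_div_linear K c hK0 hc]
    field_simp
  rw [hsub, hdiv] at key
  linarith [key]

lemma expInt_split {p x : ℝ} (hp : 0 < p) (hpx : p ≤ x) :
    expInt p = (∫ q in p..x, Real.exp (-q) / q) + expInt x := by
  have hx : 0 < x := hp.trans_le hpx
  rw [intervalIntegral.integral_of_le hpx]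
  have hu : Ioc p x ∪ Ioi x = Ioi p := Ioc_union_Ioi_eq_Ioi hpx
  have hdisj : Disjoint (Ioc p x) (Ioi x) := by
    apply Set.disjoint_left.mpr
    intro q hq1 hq2
    exact absurd hq2.out (not_lt.mpr hq1.2)
  have h1 : IntegrableOn (fun q => Real.exp (-q) / q) (Ioc p x) :=
    (integrableOn_expInt_aux hp).mono (by rw [← hu]; exact subset_union_left) le_rfl
  have := setIntegral_union hdisj measurableSet_Ioi h1 (integrableOn_expInt_aux hx)
  rw [hu] at this
  exact this

lemma hasDerivAt_expInt {u : ℝ} (hu : 0 < u) :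
    HasDerivAt expInt (-(Real.exp (-u) / u)) u := by
  set p := u / 2 with hp
  have hp0 : 0 < p := by positivity
  have hpu : p < u := by rw [hp]; linarith
  have hmain : HasDerivAt (fun x => expInt p - ∫ q in p..x, Real.exp (-q) / q)
      (-(Real.exp (-u) / u)) u := by
    have hint : IntervalIntegrable (fun q => Real.exp (-q) / q) volume p u := by
      rw [intervalIntegrable_iff_integrableOn_Ioc_of_le hpu.le]
      exact (integrableOn_expInt_aux hp0).mono Ioc_subset_Ioi_self le_rfl
    have hcont : ContinuousAt (fun q => Real.exp (-q) / q) u := by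
      apply ContinuousAt.div
      · exact (Real.continuous_exp.comp continuous_neg).continuousAt
      · exact continuousAt_id
      · exact hu.ne'
    have hm : StronglyMeasurableAtFilter (fun q : ℝ => Real.exp (-q) / q) (nhds u) :=
      (((measurable_exp.comp measurable_neg).div measurable_id).stronglyMeasurable).stronglyMeasurableAtFilter
    have h := intervalIntegral.integral_hasDerivAt_right hint hm hcont
    simpa using h.const_sub (expInt p)
  apply hmain.congr_of_eventuallyEq
  filter_upwards [Ioi_mem_nhds hpu] with x hx
  have := expInt_split hp0 (le_of_lt hx.out)
  linarith

lemma continuousOn_expInt {p : ℝ} (hp : 0 < p) : ContinuousOn expInt (Ioi p) :=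
  fun x hx => ((hasDerivAt_expInt (hp.trans hx.out)).continuousAt).continuousWithinAt

lemma exp_mul_exp_div (l u : ℝ) :
    Real.exp (-(l * u)) * (Real.exp (-u) / u) = Real.exp (-(1 + l) * u) / u := by
  rw [mul_div_assoc', ← Real.exp_add]
  congr 2
  ring

lemma exp_div_le_aux {l p u : ℝ} (hp : 0 < p) (hu : p ≤ u) :
    Real.exp (-(1 + l) * u) / u ≤ p⁻¹ * Real.exp (-(1 + l) * u) := by
  have hu0 : 0 < u := hp.trans_le hu
  rw [div_le_iff₀ hu0, mul_comm p⁻¹ _, mul_assoc]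
  have h1 : (1:ℝ) ≤ p⁻¹ * u := by
    rw [inv_mul_eq_div, le_div_iff₀ hp, one_mul]
    exact hu
  nlinarith [exp_pos (-(1 + l) * u)]

lemma integrableOn_exp_mul_expInt (l p : ℝ) (hl : 0 < 1 + l) (hp : 0 < p) :
    IntegrableOn (fun u => Real.exp (-(l * u)) * expInt u) (Ioi p) := by
  have hbase : IntegrableOn (fun u : ℝ => p⁻¹ * Real.exp (-(1 + l) * u)) (Ioi p) :=
    (exp_neg_integrableOn_Ioi p hl).const_mul _
  apply hbase.mono'
  · apply ContinuousOn.aestronglyMeasurable _ measurableSet_Ioi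
    apply ContinuousOn.mul _ (continuousOn_expInt hp)
    exact ((Real.continuous_exp.comp (continuous_const.mul continuous_id).neg)).continuousOn
  · filter_upwards [ae_restrict_mem measurableSet_Ioi] with u hu
    have hu0 : 0 < u := hp.trans hu.out
    rw [Real.norm_eq_abs, abs_of_nonneg (mul_nonneg (exp_pos _).le (expInt_nonneg hu0))]
    calc Real.exp (-(l * u)) * expInt u ≤ Real.exp (-(l * u)) * (Real.exp (-u) / u) :=
        mul_le_mul_of_nonneg_left (expInt_le hu0) (exp_pos _).le
    _ = Real.exp (-(1 + l) * u) / u := by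
        rw [mul_div_assoc', ← Real.exp_add]
        congr 2
        ring
    _ ≤ p⁻¹ * Real.exp (-(1 + l) * u) := by
        rw [div_le_iff₀ hu0, mul_comm p⁻¹ _, mul_assoc]
        have h1 : (1:ℝ) ≤ p⁻¹ * u := by
          rw [inv_mul_eq_div, le_div_iff₀ hp, one_mul]
          exact hu.out.le
        nlinarith [exp_pos (-(1 + l) * u)]

lemma integrableOn_exp_div_id (l p : ℝ) (hl : 0 < 1 + l) (hp : 0 < p) :
    IntegrableOn (fun u => Real.exp (-(l * u)) * (Real.exp (-u) / u)) (Ioi p) := by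
  have hbase : IntegrableOn (fun u : ℝ => p⁻¹ * Real.exp (-(1 + l) * u)) (Ioi p) :=
    (exp_neg_integrableOn_Ioi p hl).const_mul _
  apply hbase.mono'
  · apply Measurable.aestronglyMeasurable
    exact (measurable_exp.comp (measurable_id.const_mul l).neg).mul
      ((measurable_exp.comp measurable_neg).div measurable_id)
  · filter_upwards [ae_restrict_mem measurableSet_Ioi] with u hu
    have hu0 : 0 < u := hp.trans hu.out
    rw [Real.norm_eq_abs, abs_of_nonneg (by positivity)]
    calc Real.exp (-(l * u)) * (Real.exp (-u) / u)
        = Real.exp (-(1 + l) * u) / u := exp_mul_exp_div l u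
    _ ≤ p⁻¹ * Real.exp (-(1 + l) * u) := exp_div_le_aux hp hu.out.le

lemma integral_exp_mul_expInt (l p : ℝ) (hl1 : 0 < 1 + l) (hl0 : l ≠ 0) (hp : 0 < p) :
    (∫ u in Ioi p, Real.exp (-(l * u)) * expInt u)
      = (1/l) * (Real.exp (-(l*p)) * expInt p - expInt ((1+l)*p)) := by
  set F : ℝ → ℝ := fun u => -(1/l) * (Real.exp (-(l * u)) * expInt u) with hF
  set f' : ℝ → ℝ := fun u => Real.exp (-(l * u)) * expInt u
      + (1/l) * (Real.exp (-(l * u)) * (Real.exp (-u) / u)) with hf'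
  have hderiv : ∀ u ∈ Ici p, HasDerivAt F (f' u) u := by
    intro u hu
    have hu0 : 0 < u := lt_of_lt_of_le hp hu.out
    have he : HasDerivAt (fun u : ℝ => Real.exp (-(l * u))) (-l * Real.exp (-(l * u))) u := by
      have h1 : HasDerivAt (fun u : ℝ => -(l * u)) (-l) u := by
        simpa using (hasDerivAt_id u).const_mul (-l)
      simpa [mul_comm, Function.comp_def] using (Real.hasDerivAt_exp (-(l * u))).comp u h1
    have := (he.mul (hasDerivAt_expInt hu0)).const_mul (-(1/l))
    refine HasDerivAt.congr_deriv this ?_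
    rw [hf']
    field_simp
    ring
  have hI1 := integrableOn_exp_mul_expInt l p hl1 hp
  have hI2 := integrableOn_exp_div_id l p hl1 hp
  have hf'int : IntegrableOn f' (Ioi p) := hI1.add (hI2.const_mul (1/l))
  have htend : Tendsto F atTop (nhds 0) := by
    have hb : Tendsto (fun u : ℝ => |1/l| * (p⁻¹ * Real.exp (-(1 + l) * u))) atTop (nhds 0) := by
      have h1 : Tendsto (fun u : ℝ => Real.exp (-(1 + l) * u)) atTop (nhds 0) := by
        have h2 : Tendsto (fun u : ℝ => (1 + l) * u) atTop atTop :=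
          Tendsto.const_mul_atTop hl1 tendsto_id
        simpa only [Function.comp_def, neg_mul] using
          Real.tendsto_exp_neg_atTop_nhds_zero.comp h2
      simpa using (h1.const_mul p⁻¹).const_mul |1/l|
    apply squeeze_zero_norm' _ hb
    filter_upwards [eventually_gt_atTop p] with u hu
    have hu0 : 0 < u := hp.trans hu
    show ‖-(1/l) * (Real.exp (-(l * u)) * expInt u)‖
      ≤ |1/l| * (p⁻¹ * Real.exp (-(1 + l) * u))
    rw [norm_mul, Real.norm_eq_abs, Real.norm_eq_abs, abs_neg,
      abs_of_nonneg (mul_nonneg (exp_pos _).le (expInt_nonneg hu0))]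
    apply mul_le_mul_of_nonneg_left _ (abs_nonneg _)
    calc Real.exp (-(l * u)) * expInt u ≤ Real.exp (-(l * u)) * (Real.exp (-u) / u) :=
        mul_le_mul_of_nonneg_left (expInt_le hu0) (exp_pos _).le
    _ = Real.exp (-(1 + l) * u) / u := exp_mul_exp_div l u
    _ ≤ p⁻¹ * Real.exp (-(1 + l) * u) := exp_div_le_aux hp hu.le
  have key := integral_Ioi_of_hasDerivAt_of_tendsto' hderiv hf'int htend
  have hsplit : (∫ u in Ioi p, f' u)
      = (∫ u in Ioi p, Real.exp (-(l * u)) * expInt u)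
        + (1/l) * ∫ u in Ioi p, Real.exp (-(l * u)) * (Real.exp (-u) / u) := by
    rw [hf', integral_add hI1 (hI2.const_mul (1/l)), integral_const_mul]
  have hI2val : (∫ u in Ioi p, Real.exp (-(l * u)) * (Real.exp (-u) / u))
      = expInt ((1 + l) * p) := by
    rw [← integral_exp_mul_div (1 + l) p hl1 hp]
    apply setIntegral_congr_fun measurableSet_Ioi
    intro u hu
    dsimp only
    rw [exp_mul_exp_div l u, neg_mul]
  have hFp : F p = -(1/l) * (Real.exp (-(l * p)) * expInt p) := rfl
  rw [hsplit, hI2val, hFp] at key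
  field_simp at key ⊢
  linarith

/-- Closed form for the expected logarithm of a sum of two independent
exponentially weighted terms: for `a, b > 0` with `a ≠ b`,
`∫₀^∞∫₀^∞ ln(1+a·s+b·t)·e^{-s}·e^{-t} ds dt
  = (a·e^{1/a}·E1(1/a) − b·e^{1/b}·E1(1/b))/(a−b)`. -/
theorem integral_integral_log_one_add_two_exponentials
    (a b : ℝ) (ha : 0 < a) (hb : 0 < b) (hab : a ≠ b) :
    (∫ s in Set.Ioi (0 : ℝ), ∫ t in Set.Ioi (0 : ℝ),
        Real.log (1 + a * s + b * t) * Real.exp (-s) * Real.exp (-t))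
      = (a * Real.exp (1 / a) * expInt (1 / a) - b * Real.exp (1 / b) * expInt (1 / b))
          / (a - b) := by
  set l : ℝ := b / a - 1 with hl
  have hl1 : 0 < 1 + l := by
    rw [hl]
    have : (0:ℝ) < b / a := by positivity
    linarith
  have hl0 : l ≠ 0 := by
    rw [hl, sub_ne_zero]
    intro h
    exact hab (by field_simp at h; linarith)
  -- inner integral
  have hinner : ∀ s ∈ Ioi (0:ℝ),
      (∫ t in Set.Ioi (0 : ℝ), Real.log (1 + a * s + b * t) * Real.exp (-s) * Real.exp (-t))
        = Real.exp (-s) * Real.log (1 + a * s)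
          + Real.exp (-s) * (Real.exp ((1 + a * s)/b) * expInt ((1 + a * s)/b)) := by
    intro s hs
    have hs0 : 0 < s := hs.out
    have hK : 1 ≤ 1 + a * s := by nlinarith
    have h1 : (∫ t in Set.Ioi (0 : ℝ), Real.log (1 + a * s + b * t)
          * Real.exp (-s) * Real.exp (-t))
        = Real.exp (-s) * ∫ t in Set.Ioi (0 : ℝ),
            Real.log ((1 + a * s) + b * t) * Real.exp (-t) := by
      rw [← integral_const_mul]
      apply setIntegral_congr_fun measurableSet_Ioi
      intro t _
      dsimp only
      ring
    rw [h1, integral_log_linear_mul_exp (1 + a * s) b hK hb, mul_add]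
  -- rewrite outer integral
  rw [setIntegral_congr_fun measurableSet_Ioi hinner]
  -- integrability of both parts
  have G1 : IntegrableOn (fun s => Real.exp (-s) * Real.log (1 + a * s)) (Ioi (0:ℝ)) := by
    apply (integrableOn_log_linear_mul_exp 1 a le_rfl ha).congr_fun _ measurableSet_Ioi
    intro s _
    ring
  have G2 : IntegrableOn (fun s => Real.exp (-s)
      * (Real.exp ((1 + a * s)/b) * expInt ((1 + a * s)/b))) (Ioi (0:ℝ)) := by
    have hbase : IntegrableOn (fun s : ℝ => b * Real.exp (-s)) (Ioi (0:ℝ)) := by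
      have : IntegrableOn (fun s : ℝ => Real.exp (-s)) (Ioi (0:ℝ)) := by
        simpa [neg_one_mul] using exp_neg_integrableOn_Ioi (0:ℝ) (b:=1) one_pos
      exact this.const_mul b
    apply hbase.mono'
    · apply ContinuousOn.aestronglyMeasurable _ measurableSet_Ioi
      apply ContinuousOn.mul
      · exact (Real.continuous_exp.comp continuous_neg).continuousOn
      apply ContinuousOn.mul
      · apply Continuous.continuousOn
        exact Real.continuous_exp.comp ((continuous_const.add (continuous_const.mul continuous_id)).div_const b)
      · apply (continuousOn_expInt (p := 1/(2*b)) (by positivity)).comp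
          ((continuous_const.add (continuous_const.mul continuous_id)).div_const b).continuousOn
        intro s hs
        have hs0 : 0 < s := hs.out
        simp only [mem_Ioi]
        rw [div_lt_div_iff₀ (by positivity) hb]
        simp only [Pi.add_apply, Pi.mul_apply, id_eq]
        nlinarith [mul_pos (mul_pos ha hs0) hb]
    · filter_upwards [ae_restrict_mem measurableSet_Ioi] with s hs
      have hs0 : 0 < s := hs.out
      set M : ℝ := (1 + a * s)/b with hMdef
      have hM : 0 < M := by positivity
      have key : Real.exp M * expInt M ≤ b := by
        calc Real.exp M * expInt M ≤ Real.exp M * (Real.exp (-M) / M) :=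
            mul_le_mul_of_nonneg_left (expInt_le hM) (exp_pos _).le
        _ = 1 / M := by
            rw [mul_div_assoc', ← Real.exp_add, add_neg_cancel, Real.exp_zero]
        _ ≤ b := by
            rw [div_le_iff₀ hM, hMdef]
            rw [mul_div_assoc']
            rw [le_div_iff₀ hb]
            nlinarith [mul_pos (mul_pos ha hs0) hb]
      rw [Real.norm_eq_abs,
        abs_of_nonneg (mul_nonneg (exp_pos _).le (mul_nonneg (exp_pos _).le (expInt_nonneg hM)))]
      calc Real.exp (-s) * (Real.exp M * expInt M) ≤ Real.exp (-s) * b :=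
          mul_le_mul_of_nonneg_left key (exp_pos _).le
      _ = b * Real.exp (-s) := by ring
  rw [integral_add G1 G2]
  have hfirst : (∫ s in Ioi (0:ℝ), Real.exp (-s) * Real.log (1 + a * s))
      = Real.exp (1/a) * expInt (1/a) := by
    have h := integral_log_linear_mul_exp 1 a le_rfl ha
    have h2 : (∫ s in Ioi (0:ℝ), Real.exp (-s) * Real.log (1 + a * s))
        = ∫ s in Ioi (0:ℝ), Real.log (1 + a * s) * Real.exp (-s) := by
      apply setIntegral_congr_fun measurableSet_Ioi
      intro s _
      ring
    rw [h2, h, Real.log_one, zero_add]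
  set φ : ℝ → ℝ := fun u => Real.exp (1/a) * (Real.exp (-(l * u)) * expInt u) with hφ
  have hJ : (∫ s in Ioi (0:ℝ),
        Real.exp (-s) * (Real.exp ((1 + a * s)/b) * expInt ((1 + a * s)/b)))
      = (a/b)⁻¹ * ∫ u in Ioi (1/b), φ u := by
    have hstep1 : (∫ s in Ioi (0:ℝ),
          Real.exp (-s) * (Real.exp ((1 + a * s)/b) * expInt ((1 + a * s)/b)))
        = ∫ s in Ioi (0:ℝ), φ (a/b * (s + 1/a)) := by
      apply setIntegral_congr_fun measurableSet_Ioi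
      intro s _
      rw [hφ]
      dsimp only
      have hu : a/b * (s + 1/a) = (1 + a * s)/b := by field_simp; ring
      rw [hu, ← mul_assoc, ← mul_assoc, ← Real.exp_add, ← Real.exp_add]
      congr 2
      rw [hl]
      field_simp
      ring
    rw [hstep1, integral_comp_add_right_Ioi (fun w => φ (a/b * w)) 0 (1/a), zero_add,
      integral_comp_mul_left_Ioi φ (1/a) (by positivity : (0:ℝ) < a/b)]
    have : a/b * (1/a) = 1/b := by field_simp; try ring
    rw [this, smul_eq_mul]
  rw [hfirst, hJ]
  have hφint : (∫ u in Ioi (1/b), φ u)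
      = Real.exp (1/a) * ((1/l) * (Real.exp (-(l*(1/b))) * expInt (1/b)
          - expInt ((1+l)*(1/b)))) := by
    rw [hφ, integral_const_mul, integral_exp_mul_expInt l (1/b) hl1 hl0 (by positivity)]
  have h1b : (1+l)*(1/b) = 1/a := by
    rw [hl]
    field_simp
    try ring
  have hexp : Real.exp (1/a) * Real.exp (-(l*(1/b))) = Real.exp (1/b) := by
    rw [← Real.exp_add]
    congr 1
    rw [hl]
    field_simp
    try ring
  rw [hφint, h1b]
  have hEb : Real.exp (-(l*(1/b))) * expInt (1/b)
      = Real.exp (-(1/a)) * (Real.exp (1/b) * expInt (1/b)) := by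
    rw [← mul_assoc, ← Real.exp_add]
    congr 2
    rw [hl]
    field_simp
    try ring
  rw [hEb]
  have hab' : a - b ≠ 0 := sub_ne_zero.mpr hab
  have hlval : l = (b - a) / a := by rw [hl]; field_simp; try ring
  rw [hlval]
  have hEE : Real.exp (1/a) * Real.exp (-(1/a)) = 1 := by
    rw [← Real.exp_add, add_neg_cancel, Real.exp_zero]
  set X := Real.exp (1/a) * expInt (1/a) with hX
  set Y := Real.exp (1/b) * expInt (1/b) with hY
  have e1 : Real.exp (1/a) * (Real.exp (-(1/a)) * Y) = Y := by
    rw [← mul_assoc, hEE, one_mul]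
  have hkey : Real.exp (1/a) * (1/((b-a)/a) * (Real.exp (-(1/a)) * Y - expInt (1/a)))
      = 1/((b-a)/a) * (Y - X) := by
    have h2 : Real.exp (1/a) * (1/((b-a)/a) * (Real.exp (-(1/a)) * Y - expInt (1/a)))
        = 1/((b-a)/a) * (Real.exp (1/a) * (Real.exp (-(1/a)) * Y)
            - Real.exp (1/a) * expInt (1/a)) := by ring
    rw [h2, e1, ← hX]
  rw [hkey]
  have hba : b - a ≠ 0 := sub_ne_zero.mpr (Ne.symm hab)
  have hab' : a - b ≠ 0 := sub_ne_zero.mpr hab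
  field_simp
  ring
end
end

section
/- Converse chain inequality for the individual destination bound: for any (m,n) source-channel code for the DM MARC, with all random variables (S1^m, S2^m, W^m, W3^m, X1^n, X2^n, X3^n, Y^n, Y3^n) distributed according to the joint law induced by the source, the encoders, the causal relay function and the memoryless channel, the following holds: ∑_{i=1}^{n} I(X_{1,i}, X_{3,i}; Y_i | X_{2,i}) ≥ I(S1^m, W3^m; Y^n | S2^m, W^m) ≥ H(S1^m | S2^m, W^m) − H(S1^m | Y^n, S2^m, W^m). -/
open scoped BigOperators
open Finset

noncomputable section
open scoped Classical

namespace Paper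

def pr {Ω A : Type*} [Fintype Ω] (μ : Ω → ℝ) (X : Ω → A) (a : A) : ℝ :=
  ∑ ω, if X ω = a then μ ω else 0

def Hent {Ω A : Type*} [Fintype Ω] [Fintype A] (μ : Ω → ℝ) (X : Ω → A) : ℝ :=
  - ∑ a, pr μ X a * Real.logb 2 (pr μ X a)

def condEnt {Ω A B : Type*} [Fintype Ω] [Fintype A] [Fintype B]
    (μ : Ω → ℝ) (X : Ω → A) (Y : Ω → B) : ℝ :=
  Hent μ (fun ω => (X ω, Y ω)) - Hent μ Y

def mutInfo {Ω A B : Type*} [Fintype Ω] [Fintype A] [Fintype B]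
    (μ : Ω → ℝ) (X : Ω → A) (Y : Ω → B) : ℝ :=
  Hent μ X + Hent μ Y - Hent μ (fun ω => (X ω, Y ω))

def condMutInfo {Ω A B C : Type*} [Fintype Ω] [Fintype A] [Fintype B] [Fintype C]
    (μ : Ω → ℝ) (X : Ω → A) (Y : Ω → B) (Z : Ω → C) : ℝ :=
  condEnt μ X Z - condEnt μ X (fun ω => (Y ω, Z ω))

structure SourcePMF (S : Type) [Fintype S] where
  q : S → ℝ
  nonneg : ∀ s, 0 ≤ q s
  sum_one : ∑ s, q s = 1

/-- A discrete memoryless multiple-access relay channel. -/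
structure DMMARC (X1 X2 X3 Y Y3 : Type) [Fintype X1] [Fintype X2] [Fintype X3]
    [Fintype Y] [Fintype Y3] where
  P : X1 → X2 → X3 → Y → Y3 → ℝ
  nonneg : ∀ x1 x2 x3 y y3, 0 ≤ P x1 x2 x3 y y3
  sum_one : ∀ x1 x2 x3, ∑ y : Y, ∑ y3 : Y3, P x1 x2 x3 y y3 = 1

/-- An (m,n) source-channel code for the MARC: two encoders, a causal relay
encoding function and a destination decoder. -/
structure MARCCode (S1 S2 W W3 X1 X2 X3 Y Y3 : Type) (m n : ℕ) where
  f1 : (Fin m → S1) → Fin n → X1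
  f2 : (Fin m → S2) → Fin n → X2
  f3 : (k : Fin n) → (Fin k.val → Y3) → (Fin m → W3) → X3
  g : (Fin n → Y) → (Fin m → W) → (Fin m → S1) × (Fin m → S2)

variable {S1 S2 W W3 X1 X2 X3 Y Y3 : Type} {m n : ℕ}

/-- The relay channel input at time `k` (causal function of past relay outputs and `W3^m`). -/
def relayIn (c : MARCCode S1 S2 W W3 X1 X2 X3 Y Y3 m n)
    (y3 : Fin n → Y3) (w3 : Fin m → W3) (k : Fin n) : X3 :=
  c.f3 k (fun j => y3 ⟨j.val, j.isLt.trans k.isLt⟩) w3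

section
variable [Fintype S1] [Fintype S2] [Fintype W] [Fintype W3]
  [Fintype X1] [Fintype X2] [Fintype X3] [Fintype Y] [Fintype Y3]

/-- Joint law on (source sequences, destination outputs, relay outputs)
induced by the i.i.d. source, the encoders, the causal relay function and the
memoryless channel. -/
def marcLaw (src : SourcePMF (S1 × S2 × W × W3)) (ch : DMMARC X1 X2 X3 Y Y3)
    (c : MARCCode S1 S2 W W3 X1 X2 X3 Y Y3 m n) :
    ((Fin m → S1 × S2 × W × W3) × (Fin n → Y) × (Fin n → Y3)) → ℝ :=
  fun ω => (∏ i, src.q (ω.1 i)) *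
    ∏ k, ch.P (c.f1 (fun i => (ω.1 i).1) k) (c.f2 (fun i => (ω.1 i).2.1) k)
      (relayIn c ω.2.2 (fun i => (ω.1 i).2.2.2) k) (ω.2.1 k) (ω.2.2 k)

/-- Error probability of a MARC source-channel code. -/
def marcErr (src : SourcePMF (S1 × S2 × W × W3)) (ch : DMMARC X1 X2 X3 Y Y3)
    (c : MARCCode S1 S2 W W3 X1 X2 X3 Y Y3 m n) : ℝ :=
  ∑ ω : (Fin m → S1 × S2 × W × W3) × (Fin n → Y) × (Fin n → Y3),
    if c.g ω.2.1 (fun i => (ω.1 i).2.2.1) ≠ (fun i => (ω.1 i).1, fun i => (ω.1 i).2.1)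
    then marcLaw src ch c ω else 0

/-- Achievability of the source-channel rate `κ` for the DM MARC. -/
def marcAchievable (src : SourcePMF (S1 × S2 × W × W3)) (ch : DMMARC X1 X2 X3 Y Y3)
    (κ : ℝ) : Prop :=
  ∀ ε : ℝ, 0 < ε → ∃ m0 n0 : ℕ, ∀ m n : ℕ, m0 < m → n0 < n → (n : ℝ) / m = κ →
    ∃ c : MARCCode S1 S2 W W3 X1 X2 X3 Y Y3 m n, marcErr src ch c < ε

end



set_option linter.unusedSectionVars false

section AuxEnt
variable {Ω : Type*} [Fintype Ω] {μ : Ω → ℝ}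

lemma pr_nonneg (hμ : ∀ ω, 0 ≤ μ ω) {A : Type*} (X : Ω → A) (a : A) : 0 ≤ pr μ X a :=
  Finset.sum_nonneg fun ω _ => by split <;> simp [hμ ω]

lemma pr_le_pr (hμ : ∀ ω, 0 ≤ μ ω) {A B : Type*} (X : Ω → A) (X' : Ω → B) (ω : Ω)
    (h : ∀ ω', X ω' = X ω → X' ω' = X' ω) :
    pr μ X (X ω) ≤ pr μ X' (X' ω) := by
  apply Finset.sum_le_sum
  intro ω' _
  by_cases hx : X ω' = X ω
  · simp only [if_pos hx, if_pos (h ω' hx), le_refl]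
  · simp only [if_neg hx]
    split <;> simp [hμ ω']

lemma self_le_pr (hμ : ∀ ω, 0 ≤ μ ω) {A : Type*} (X : Ω → A) (ω : Ω) :
    μ ω ≤ pr μ X (X ω) := by
  classical
  calc μ ω = ∑ ω' ∈ {ω}, (if X ω' = X ω then μ ω' else 0) := by simp
  _ ≤ _ := Finset.sum_le_sum_of_subset_of_nonneg (by simp) (fun ω' _ _ => by
      split <;> simp [hμ ω'])

lemma pr_pos_witness (hμ : ∀ ω, 0 ≤ μ ω) {A : Type*} (X : Ω → A) (v : A)
    (h : 0 < pr μ X v) : ∃ ω, X ω = v ∧ 0 < μ ω := by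
  by_contra hc
  push_neg at hc
  have hz : pr μ X v = 0 := by
    apply Finset.sum_eq_zero
    intro ω _
    split
    · next hx => exact le_antisymm (hc ω hx) (hμ ω)
    · rfl
  rw [hz] at h
  exact lt_irrefl 0 h

lemma sum_pr_mul {A : Type*} [Fintype A] (X : Ω → A) (f : A → ℝ) :
    ∑ a, pr μ X a * f a = ∑ ω, μ ω * f (X ω) := by
  unfold pr
  simp only [Finset.sum_mul]
  rw [Finset.sum_comm]
  refine Finset.sum_congr rfl fun ω _ => ?_
  rw [Finset.sum_eq_single (X ω)]
  · simp
  · intro b _ hb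
    rw [if_neg (fun h => hb h.symm), zero_mul]
  · simp

lemma Hent_eq_omega_sum {A : Type*} [Fintype A] (X : Ω → A) :
    Hent μ X = - ∑ ω, μ ω * Real.logb 2 (pr μ X (X ω)) := by
  unfold Hent
  rw [sum_pr_mul]

lemma pr_congr_point {A B : Type*} (X : Ω → A) (Y : Ω → B)
    (h : ∀ ω ω', X ω = X ω' ↔ Y ω = Y ω') (ω : Ω) :
    pr μ X (X ω) = pr μ Y (Y ω) := by
  unfold pr
  refine Finset.sum_congr rfl fun ω' _ => ?_
  by_cases hx : X ω' = X ω
  · rw [if_pos hx, if_pos ((h ω' ω).1 hx)]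
  · rw [if_neg hx, if_neg (fun hy => hx ((h ω' ω).2 hy))]

lemma Hent_congr {A B : Type*} [Fintype A] [Fintype B] (X : Ω → A) (Y : Ω → B)
    (h : ∀ ω ω', X ω = X ω' ↔ Y ω = Y ω') :
    Hent μ X = Hent μ Y := by
  rw [Hent_eq_omega_sum, Hent_eq_omega_sum]
  congr 1
  exact Finset.sum_congr rfl fun ω _ => by rw [pr_congr_point X Y h ω]

lemma sum_pr {A : Type*} [Fintype A] (X : Ω → A) :
    ∑ a, pr μ X a = ∑ ω, μ ω := by
  have := sum_pr_mul (μ := μ) X (fun _ => (1:ℝ))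
  simpa using this

lemma pr_fst_marginal {A B : Type*} [Fintype A] (X : Ω → A) (Z : Ω → B) (c : B) :
    ∑ a, pr μ (fun ω => (X ω, Z ω)) (a, c) = pr μ Z c := by
  unfold pr
  rw [Finset.sum_comm]
  refine Finset.sum_congr rfl fun ω _ => ?_
  by_cases hz : Z ω = c
  · rw [Finset.sum_eq_single (X ω)]
    · simp [hz]
    · intro b _ hb
      rw [if_neg (by simp [Prod.ext_iff]; intro h; exact absurd h.symm hb)]
    · simp
  · rw [if_neg hz]
    apply Finset.sum_eq_zero
    intro b _
    rw [if_neg (by simp [Prod.ext_iff, hz])]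

/-- Submodularity of Shannon entropy for nonnegative finite measures. -/
lemma Hent_submod (hμ : ∀ ω, 0 ≤ μ ω) {α β γ : Type*} [Fintype α] [Fintype β] [Fintype γ]
    (A : Ω → α) (B : Ω → β) (C : Ω → γ) :
    Hent μ (fun ω => (A ω, B ω, C ω)) + Hent μ C
      ≤ Hent μ (fun ω => (A ω, C ω)) + Hent μ (fun ω => (B ω, C ω)) := by
  set pABC := pr μ (fun ω => (A ω, B ω, C ω)) with hpABC
  set pAC := pr μ (fun ω => (A ω, C ω)) with hpAC
  set pBC := pr μ (fun ω => (B ω, C ω)) with hpBC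
  set pC := pr μ C with hpC
  -- the difference as a single sum over values
  have key : Hent μ (fun ω => (A ω, C ω)) + Hent μ (fun ω => (B ω, C ω))
      - (Hent μ (fun ω => (A ω, B ω, C ω)) + Hent μ C)
      = ∑ v : α × β × γ, pABC v *
          (Real.logb 2 (pABC v) + Real.logb 2 (pC v.2.2)
            - Real.logb 2 (pAC (v.1, v.2.2)) - Real.logb 2 (pBC (v.2.1, v.2.2))) := by
    rw [Hent_eq_omega_sum (fun ω => (A ω, C ω)), Hent_eq_omega_sum (fun ω => (B ω, C ω)),
      Hent_eq_omega_sum (fun ω => (A ω, B ω, C ω)), Hent_eq_omega_sum C,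
      sum_pr_mul (μ := μ) (fun ω => (A ω, B ω, C ω))
        (fun v => Real.logb 2 (pABC v) + Real.logb 2 (pC v.2.2)
          - Real.logb 2 (pAC (v.1, v.2.2)) - Real.logb 2 (pBC (v.2.1, v.2.2)))]
    have halg : ∀ S1 S2 S3 S4 : ℝ, -S1 + -S2 - (-S3 + -S4) = (S3 + S4) - (S1 + S2) := by
      intros; ring
    rw [halg, ← Finset.sum_add_distrib, ← Finset.sum_add_distrib, ← Finset.sum_sub_distrib]
    exact Finset.sum_congr rfl fun ω _ => by ring
  set b : α × β × γ → ℝ := fun v =>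
    if pC v.2.2 = 0 then 0 else pAC (v.1, v.2.2) * pBC (v.2.1, v.2.2) / pC v.2.2 with hbdef
  have hlog2 : (0:ℝ) < Real.log 2 := Real.log_pos (by norm_num)
  have hterm : ∀ v : α × β × γ, (pABC v - b v) / Real.log 2 ≤ pABC v *
      (Real.logb 2 (pABC v) + Real.logb 2 (pC v.2.2)
        - Real.logb 2 (pAC (v.1, v.2.2)) - Real.logb 2 (pBC (v.2.1, v.2.2))) := by
    intro v
    have hbnn : 0 ≤ b v := by
      rw [hbdef]
      dsimp only
      split
      · exact le_refl 0
      · have h0 : 0 ≤ pC v.2.2 := pr_nonneg hμ C v.2.2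
        have : 0 ≤ pAC (v.1, v.2.2) := pr_nonneg hμ _ _
        have : 0 ≤ pBC (v.2.1, v.2.2) := pr_nonneg hμ _ _
        positivity
    rcases eq_or_lt_of_le (show (0:ℝ) ≤ pABC v from pr_nonneg hμ (fun ω => (A ω, B ω, C ω)) v) with ha | ha
    · rw [← ha]
      simp only [zero_mul, zero_sub]
      exact div_nonpos_of_nonpos_of_nonneg (by linarith) (le_of_lt hlog2)
    · -- pABC v > 0 : find a witness ω
      obtain ⟨ω, hv, hμω'⟩ := pr_pos_witness hμ (fun ω => (A ω, B ω, C ω)) v (by rw [hpABC] at ha; exact ha)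
      subst hv
      have hCpos : pABC (A ω, B ω, C ω) ≤ pC (C ω) :=
        pr_le_pr hμ (fun ω => (A ω, B ω, C ω)) C ω (fun ω' h => congrArg (fun v => v.2.2) h)
      have hACpos : pABC (A ω, B ω, C ω) ≤ pAC (A ω, C ω) :=
        pr_le_pr hμ (fun ω => (A ω, B ω, C ω)) (fun ω => (A ω, C ω)) ω
          (fun ω' h => congrArg (fun v => (v.1, v.2.2)) h)
      have hBCpos : pABC (A ω, B ω, C ω) ≤ pBC (B ω, C ω) :=
        pr_le_pr hμ (fun ω => (A ω, B ω, C ω)) (fun ω => (B ω, C ω)) ω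
          (fun ω' h => congrArg (fun v => (v.2.1, v.2.2)) h)
      set a := pABC (A ω, B ω, C ω) with hadef
      set cc := pC (C ω) with hccdef
      set ee := pAC (A ω, C ω) with heedef
      set ff := pBC (B ω, C ω) with hffdef
      have hc0 : 0 < cc := lt_of_lt_of_le ha hCpos
      have he0 : 0 < ee := lt_of_lt_of_le ha hACpos
      have hf0 : 0 < ff := lt_of_lt_of_le ha hBCpos
      have hbv : b (A ω, B ω, C ω) = ee * ff / cc := by
        rw [hbdef]; exact if_neg (ne_of_gt hc0)
      have hb0 : 0 < b (A ω, B ω, C ω) := by rw [hbv]; positivity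
      -- logb to log
      have hlogb : ∀ x : ℝ, Real.logb 2 x = Real.log x / Real.log 2 := fun x => rfl
      simp only [hlogb]
      have hcomb : Real.log a / Real.log 2 + Real.log cc / Real.log 2
          - Real.log ee / Real.log 2 - Real.log ff / Real.log 2
          = (Real.log a + Real.log cc - Real.log ee - Real.log ff) / Real.log 2 := by
        ring
      rw [hcomb, ← mul_div_assoc, div_le_div_iff_of_pos_right hlog2]
      -- key log inequality
      have hlq : Real.log (b (A ω, B ω, C ω) / a) ≤ b (A ω, B ω, C ω) / a - 1 :=
        Real.log_le_sub_one_of_pos (by positivity)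
      have hexp : Real.log (b (A ω, B ω, C ω) / a)
          = Real.log ee + Real.log ff - Real.log cc - Real.log a := by
        rw [hbv, Real.log_div (by positivity) (ne_of_gt ha),
          Real.log_div (by positivity) (ne_of_gt hc0),
          Real.log_mul (ne_of_gt he0) (ne_of_gt hf0)]
      have hdiv : a * (b (A ω, B ω, C ω) / a) = b (A ω, B ω, C ω) := by
        field_simp
      nlinarith [mul_le_mul_of_nonneg_left hlq (le_of_lt ha)]
  have hsum_b : ∑ v : α × β × γ, b v ≤ ∑ v : α × β × γ, pABC v := by
    have h1 : ∑ v : α × β × γ, b v = ∑ z : γ, (if pC z = 0 then 0 else pC z) := by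
      rw [Fintype.sum_prod_type]
      simp_rw [Fintype.sum_prod_type]
      have hsw : ∀ x : α, ∑ y : β, ∑ z : γ, b (x, y, z) = ∑ z : γ, ∑ y : β, b (x, y, z) :=
        fun x => Finset.sum_comm
      simp_rw [hsw]
      rw [Finset.sum_comm]
      refine Finset.sum_congr rfl fun z _ => ?_
      by_cases hz : pC z = 0
      · simp [hbdef, hz]
      · simp only [hbdef, if_neg hz]
        simp_rw [← Finset.sum_div, ← Finset.mul_sum, ← Finset.sum_mul]
        rw [pr_fst_marginal A C z, pr_fst_marginal B C z]
        rw [mul_div_assoc, div_self hz, mul_one]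
    rw [h1, sum_pr]
    have h2 : ∑ z : γ, (if pC z = 0 then 0 else pC z) ≤ ∑ z : γ, pC z := by
      refine Finset.sum_le_sum fun z _ => ?_
      split
      · exact pr_nonneg hμ C z
      · exact le_refl _
    calc _ ≤ ∑ z : γ, pC z := h2
    _ = ∑ ω, μ ω := sum_pr C
  have hfinal : 0 ≤ ∑ v : α × β × γ, pABC v *
      (Real.logb 2 (pABC v) + Real.logb 2 (pC v.2.2)
        - Real.logb 2 (pAC (v.1, v.2.2)) - Real.logb 2 (pBC (v.2.1, v.2.2))) := by
    calc (0:ℝ) ≤ (∑ v : α × β × γ, pABC v - ∑ v : α × β × γ, b v) / Real.log 2 :=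
      div_nonneg (by linarith) (le_of_lt hlog2)
    _ = ∑ v : α × β × γ, (pABC v - b v) / Real.log 2 := by
        rw [← Finset.sum_sub_distrib, Finset.sum_div]
    _ ≤ _ := Finset.sum_le_sum fun v _ => hterm v
  linarith [key, hfinal]

lemma condEnt_le_of_refines (hμ : ∀ ω, 0 ≤ μ ω) {A B C : Type*} [Fintype A] [Fintype B]
    [Fintype C] (X : Ω → A) (U : Ω → B) (V : Ω → C)
    (h : ∀ ω ω', V ω = V ω' → U ω = U ω') :
    condEnt μ X V ≤ condEnt μ X U := by
  have h1 : Hent μ (fun ω => (X ω, V ω)) = Hent μ (fun ω => (X ω, V ω, U ω)) := by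
    apply Hent_congr
    intro ω ω'
    simp only [Prod.mk.injEq]
    constructor
    · rintro ⟨hx, hv⟩; exact ⟨hx, hv, h ω ω' hv⟩
    · rintro ⟨hx, hv, -⟩; exact ⟨hx, hv⟩
  have h2 : Hent μ V = Hent μ (fun ω => (V ω, U ω)) := by
    apply Hent_congr
    intro ω ω'
    simp only [Prod.mk.injEq]
    constructor
    · intro hv; exact ⟨hv, h ω ω' hv⟩
    · rintro ⟨hv, -⟩; exact hv
  have h3 := Hent_submod hμ X V U
  unfold condEnt
  rw [h1, h2]
  linarith

lemma condMutInfo_nonneg (hμ : ∀ ω, 0 ≤ μ ω) {A B C : Type*} [Fintype A] [Fintype B]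
    [Fintype C] (X : Ω → A) (Y : Ω → B) (Z : Ω → C) :
    0 ≤ condMutInfo μ X Y Z := by
  unfold condMutInfo
  rw [sub_nonneg]
  exact condEnt_le_of_refines hμ X Z (fun ω => (Y ω, Z ω))
    (fun ω ω' h => congrArg Prod.snd h)

lemma condMutInfo_comm {A B C : Type*} [Fintype A] [Fintype B] [Fintype C]
    (X : Ω → A) (Y : Ω → B) (Z : Ω → C) :
    condMutInfo μ X Y Z = condMutInfo μ Y X Z := by
  have h1 : Hent μ (fun ω => (X ω, Y ω, Z ω)) = Hent μ (fun ω => (Y ω, X ω, Z ω)) := by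
    apply Hent_congr
    intro ω ω'
    simp only [Prod.mk.injEq]
    tauto
  unfold condMutInfo condEnt
  rw [h1]
  ring

lemma pr_decomp {DT A : Type*} [Fintype DT] (Dv : Ω → DT) (Xv : Ω → A) (v : A) :
    pr μ Xv v = ∑ d : DT, pr (fun ω => if Dv ω = d then μ ω else 0) Xv v := by
  simp only [pr]
  rw [Finset.sum_comm]
  refine Finset.sum_congr rfl fun ω _ => ?_
  by_cases hx : Xv ω = v
  · rw [if_pos hx]
    rw [show (∑ d : DT, if Xv ω = v then (if Dv ω = d then μ ω else 0) else 0)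
        = ∑ d : DT, (if Dv ω = d then μ ω else 0) from
      Finset.sum_congr rfl fun d _ => if_pos hx]
    rw [Finset.sum_eq_single (Dv ω)]
    · exact (if_pos rfl).symm
    · intro d _ hd
      exact if_neg (fun hc => hd hc.symm)
    · intro h; exact absurd (Finset.mem_univ _) h
  · rw [if_neg hx]
    exact (Finset.sum_eq_zero fun d _ => if_neg hx).symm

lemma pr_restrict_zero {DT A : Type*} (Dv : Ω → DT) (d : DT) (hex : ∀ ω, Dv ω ≠ d)
    (Xv : Ω → A) (v : A) :
    pr (fun ω => if Dv ω = d then μ ω else 0) Xv v = 0 := by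
  apply Finset.sum_eq_zero
  intro ω' _
  by_cases hx : Xv ω' = v
  · rw [if_pos hx]
    exact if_neg (hex ω')
  · rw [if_neg hx]

/-- If `T` is a function of `D` and the conditional law of `Yv` given `D`
factors through `T`, then conditioning on `D` or on `T` gives the same
conditional entropy. -/
lemma condEnt_collapse (hμ : ∀ ω, 0 ≤ μ ω) {G DT TT : Type*} [Fintype G] [Fintype DT]
    [Fintype TT] (Yv : Ω → G) (Dv : Ω → DT) (Tv : Ω → TT) (r : G → TT → ℝ)
    (hdet : ∀ ω ω', Dv ω = Dv ω' → Tv ω = Tv ω')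
    (hfac : ∀ ω y, pr μ (fun ω' => (Yv ω', Dv ω')) (y, Dv ω) = r y (Tv ω) * pr μ Dv (Dv ω)) :
    condEnt μ Yv Dv = condEnt μ Yv Tv := by
  -- Step (i): the factorization carries over to conditioning on T
  have hB : ∀ ω0 y, pr μ (fun ω' => (Yv ω', Tv ω')) (y, Tv ω0)
      = r y (Tv ω0) * pr μ Tv (Tv ω0) := by
    intro ω0 y
    rw [pr_decomp Dv (fun ω' => (Yv ω', Tv ω')) (y, Tv ω0), pr_decomp Dv Tv (Tv ω0),
      Finset.mul_sum]
    refine Finset.sum_congr rfl fun d _ => ?_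
    by_cases hex : ∃ ω1, Dv ω1 = d
    · obtain ⟨ω1, hd1⟩ := hex
      have hTconst : ∀ ω', Dv ω' = d → Tv ω' = Tv ω1 :=
        fun ω' hm => hdet ω' ω1 (by rw [hm, hd1])
      by_cases ht : Tv ω1 = Tv ω0
      · have hL : pr (fun ω => if Dv ω = d then μ ω else 0)
            (fun ω' => (Yv ω', Tv ω')) (y, Tv ω0)
            = pr μ (fun ω' => (Yv ω', Dv ω')) (y, d) := by
          simp only [pr]
          refine Finset.sum_congr rfl fun ω' _ => ?_
          by_cases hd' : Dv ω' = d
          · have htv : Tv ω' = Tv ω0 := by rw [hTconst ω' hd', ht]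
            by_cases hy : Yv ω' = y
            · have hc1 : (Yv ω', Tv ω') = (y, Tv ω0) := by rw [hy, htv]
              have hc2 : (Yv ω', Dv ω') = (y, d) := by rw [hy, hd']
              rw [if_pos hc1, if_pos hc2]
              exact if_pos hd'
            · rw [if_neg (fun hc => hy (Prod.ext_iff.1 hc).1),
                if_neg (fun hc => hy (Prod.ext_iff.1 hc).1)]
          · rw [if_neg (show ¬((Yv ω', Dv ω') = (y, d)) from
              fun hc => hd' (Prod.ext_iff.1 hc).2)]
            by_cases hc1 : (Yv ω', Tv ω') = (y, Tv ω0)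
            · rw [if_pos hc1]
              exact if_neg hd'
            · rw [if_neg hc1]
        have hD : pr (fun ω => if Dv ω = d then μ ω else 0) Tv (Tv ω0)
            = pr μ Dv d := by
          simp only [pr]
          refine Finset.sum_congr rfl fun ω' _ => ?_
          by_cases hd' : Dv ω' = d
          · have htv : Tv ω' = Tv ω0 := by rw [hTconst ω' hd', ht]
            rw [if_pos htv]
          · by_cases htv : Tv ω' = Tv ω0
            · rw [if_pos htv]
            · rw [if_neg htv, if_neg hd']
        rw [hL, hD]
        have hf := hfac ω1 y
        rw [hd1, ht] at hf
        exact hf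
      · have hzL : pr (fun ω => if Dv ω = d then μ ω else 0)
            (fun ω' => (Yv ω', Tv ω')) (y, Tv ω0) = 0 := by
          apply Finset.sum_eq_zero
          intro ω' _
          by_cases hd' : Dv ω' = d
          · exact if_neg (fun hc => ht (by
              rw [← hTconst ω' hd']; exact (Prod.ext_iff.1 hc).2))
          · by_cases hc1 : (Yv ω', Tv ω') = (y, Tv ω0)
            · rw [if_pos hc1]
              exact if_neg hd'
            · rw [if_neg hc1]
        have hzR : pr (fun ω => if Dv ω = d then μ ω else 0) Tv (Tv ω0) = 0 := by
          apply Finset.sum_eq_zero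
          intro ω' _
          by_cases hd' : Dv ω' = d
          · exact if_neg (fun hc => ht (by rw [← hTconst ω' hd', hc]))
          · by_cases htv : Tv ω' = Tv ω0
            · rw [if_pos htv]
              exact if_neg hd'
            · rw [if_neg htv]
        rw [hzL, hzR, mul_zero]
    · push_neg at hex
      rw [pr_restrict_zero Dv d hex (fun ω' => (Yv ω', Tv ω')) (y, Tv ω0),
        pr_restrict_zero Dv d hex Tv (Tv ω0), mul_zero]
  -- Step (ii): termwise cancellation in the entropy sums
  unfold condEnt
  rw [Hent_eq_omega_sum (fun ω => (Yv ω, Dv ω)), Hent_eq_omega_sum Dv,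
    Hent_eq_omega_sum (fun ω => (Yv ω, Tv ω)), Hent_eq_omega_sum Tv]
  have key : ∑ ω, μ ω * Real.logb 2 (pr μ (fun ω' => (Yv ω', Dv ω')) (Yv ω, Dv ω))
      - ∑ ω, μ ω * Real.logb 2 (pr μ Dv (Dv ω))
      = ∑ ω, μ ω * Real.logb 2 (pr μ (fun ω' => (Yv ω', Tv ω')) (Yv ω, Tv ω))
      - ∑ ω, μ ω * Real.logb 2 (pr μ Tv (Tv ω)) := by
    rw [← Finset.sum_sub_distrib, ← Finset.sum_sub_distrib]
    refine Finset.sum_congr rfl fun ω _ => ?_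
    rcases eq_or_lt_of_le (hμ ω) with h0 | h0
    · rw [← h0]; ring
    · have hpD : 0 < pr μ Dv (Dv ω) := lt_of_lt_of_le h0 (self_le_pr hμ Dv ω)
      have hpYD : 0 < pr μ (fun ω' => (Yv ω', Dv ω')) (Yv ω, Dv ω) :=
        lt_of_lt_of_le h0 (self_le_pr hμ (fun ω' => (Yv ω', Dv ω')) ω)
      have hpT : 0 < pr μ Tv (Tv ω) := lt_of_lt_of_le h0 (self_le_pr hμ Tv ω)
      have hr : 0 < r (Yv ω) (Tv ω) := by
        have hf := hfac ω (Yv ω)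
        nlinarith [hf, hpD, hpYD]
      rw [hfac ω (Yv ω), hB ω (Yv ω), Real.logb_mul (ne_of_gt hr) (ne_of_gt hpD),
        Real.logb_mul (ne_of_gt hr) (ne_of_gt hpT)]
      ring
  linarith [key]

end AuxEnt

section ChannelComp

lemma sum_swap4 {α β γ δ : Type*} [Fintype α] [Fintype β] [Fintype γ] [Fintype δ]
    (g : α → β → γ → δ → ℝ) :
    ∑ y : α, ∑ y3 : β, ∑ a : γ, ∑ b : δ, g y y3 a b
      = ∑ a : γ, ∑ b : δ, ∑ y : α, ∑ y3 : β, g y y3 a b := by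
  calc ∑ y : α, ∑ y3 : β, ∑ a : γ, ∑ b : δ, g y y3 a b
      = ∑ y : α, ∑ a : γ, ∑ y3 : β, ∑ b : δ, g y y3 a b :=
        Finset.sum_congr rfl fun y _ => Finset.sum_comm
    _ = ∑ a : γ, ∑ y : α, ∑ y3 : β, ∑ b : δ, g y y3 a b := Finset.sum_comm
    _ = ∑ a : γ, ∑ y : α, ∑ b : δ, ∑ y3 : β, g y y3 a b :=
        Finset.sum_congr rfl fun a _ => Finset.sum_congr rfl fun y _ => Finset.sum_comm
    _ = ∑ a : γ, ∑ b : δ, ∑ y : α, ∑ y3 : β, g y y3 a b :=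
        Finset.sum_congr rfl fun a _ => Finset.sum_comm

variable {X1 X2 X3 Y Y3 : Type} [Fintype X1] [Fintype X2] [Fintype X3] [Fintype Y] [Fintype Y3]

lemma suffix_sum {n : ℕ} (ch : DMMARC X1 X2 X3 Y Y3) (x1 : Fin n → X1) (x2 : Fin n → X2)
    (x3f : (Fin n → Y3) → Fin n → X3)
    (hx3 : ∀ y3 y3' (k : Fin n), (∀ j : Fin n, j.val < k.val → y3 j = y3' j) →
      x3f y3 k = x3f y3' k) :
    ∀ (d j : ℕ), j + d = n → ∀ (y0 : Fin n → Y) (y30 : Fin n → Y3),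
    (∑ y : Fin n → Y, ∑ y3 : Fin n → Y3,
      if (∀ k : Fin n, k.val < j → (y k = y0 k ∧ y3 k = y30 k))
      then ∏ k, ch.P (x1 k) (x2 k) (x3f y3 k) (y k) (y3 k) else 0)
    = ∏ k : Fin n, (if k.val < j then ch.P (x1 k) (x2 k) (x3f y30 k) (y0 k) (y30 k) else 1) := by
  intro d
  induction d with
  | zero =>
    intro j hj y0 y30
    have hjn : j = n := by omega
    subst hjn
    rw [Finset.sum_eq_single y0]
    · rw [Finset.sum_eq_single y30]
      · rw [if_pos (fun (k : Fin j) (_ : k.val < j) => (⟨rfl, rfl⟩ : y0 k = y0 k ∧ y30 k = y30 k))]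
        exact (Finset.prod_congr rfl fun k _ => if_pos k.isLt).symm
      · intro y3 _ hy3
        exact if_neg (fun hc => hy3 (funext fun k => (hc k k.isLt).2))
      · intro h; exact absurd (Finset.mem_univ _) h
    · intro y _ hy
      exact Finset.sum_eq_zero fun y3 _ =>
        if_neg (fun hc => hy (funext fun k => (hc k k.isLt).1))
    · intro h; exact absurd (Finset.mem_univ _) h
  | succ d ih =>
    intro j hj y0 y30
    have hjn : j < n := by omega
    set jf : Fin n := ⟨j, hjn⟩ with hjf
    have key : ∀ (y : Fin n → Y) (y3 : Fin n → Y3),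
        (if (∀ k : Fin n, k.val < j → (y k = y0 k ∧ y3 k = y30 k))
          then ∏ k, ch.P (x1 k) (x2 k) (x3f y3 k) (y k) (y3 k) else 0)
        = ∑ a : Y, ∑ b : Y3,
          (if (∀ k : Fin n, k.val < j + 1 →
              (y k = Function.update y0 jf a k ∧ y3 k = Function.update y30 jf b k))
            then ∏ k, ch.P (x1 k) (x2 k) (x3f y3 k) (y k) (y3 k) else 0) := by
      intro y y3
      rw [Finset.sum_eq_single (y jf)]
      · rw [Finset.sum_eq_single (y3 jf)]
        · refine (if_congr ?_ rfl rfl).symm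
          constructor
          · intro hc k hk
            obtain ⟨h1, h2⟩ := hc k (by omega)
            have hkj : k ≠ jf := by
              intro he
              rw [he] at hk
              exact absurd hk (lt_irrefl _)
            rw [Function.update_of_ne hkj] at h1
            rw [Function.update_of_ne hkj] at h2
            exact ⟨h1, h2⟩
          · intro hc k hk
            by_cases hkj : k = jf
            · subst hkj
              rw [Function.update_self, Function.update_self]
              exact ⟨rfl, rfl⟩
            · have hkj' : k.val < j := by
                have hne : k.val ≠ j := fun he => hkj (Fin.ext he)
                omega
              rw [Function.update_of_ne hkj, Function.update_of_ne hkj]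
              exact hc k hkj'
        · intro b _ hb
          refine if_neg (fun hc => hb ?_)
          have h2 := (hc jf (Nat.lt_succ_self j)).2
          rw [Function.update_self] at h2
          exact h2.symm
        · intro h; exact absurd (Finset.mem_univ _) h
      · intro a _ ha
        refine Finset.sum_eq_zero fun b _ => if_neg (fun hc => ha ?_)
        have h1 := (hc jf (Nat.lt_succ_self j)).1
        rw [Function.update_self] at h1
        exact h1.symm
      · intro h; exact absurd (Finset.mem_univ _) h
    -- sum over the value at coordinate j
    rw [Finset.sum_congr rfl fun y _ => Finset.sum_congr rfl fun y3 _ => key y y3]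
    rw [sum_swap4 (fun (y : Fin n → Y) (y3 : Fin n → Y3) (a : Y) (b : Y3) =>
      (if (∀ k : Fin n, k.val < j + 1 →
          (y k = Function.update y0 jf a k ∧ y3 k = Function.update y30 jf b k))
        then ∏ k, ch.P (x1 k) (x2 k) (x3f y3 k) (y k) (y3 k) else 0))]
    rw [Finset.sum_congr rfl fun a _ => Finset.sum_congr rfl fun b _ =>
      ih (j+1) (by omega) (Function.update y0 jf a) (Function.update y30 jf b)]
    -- split the product at coordinate j
    have hx3pre : ∀ (b : Y3) (k : Fin n), k.val ≤ j →
        x3f (Function.update y30 jf b) k = x3f y30 k := by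
      intro b k hk
      apply hx3
      intro j' hj'
      refine Function.update_of_ne ?_ _ _
      intro he
      have hje : (j' : ℕ) = j := by rw [he]
      omega
    have split : ∀ (a : Y) (b : Y3),
        (∏ k : Fin n, if k.val < j + 1 then ch.P (x1 k) (x2 k)
            (x3f (Function.update y30 jf b) k) (Function.update y0 jf a k)
            (Function.update y30 jf b k) else 1)
        = (∏ k : Fin n, if k.val < j then
              ch.P (x1 k) (x2 k) (x3f y30 k) (y0 k) (y30 k) else 1)
          * ch.P (x1 jf) (x2 jf) (x3f y30 jf) a b := by
      intro a b
      have hL := (Finset.mul_prod_erase Finset.univ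
        (fun k : Fin n => if k.val < j + 1 then ch.P (x1 k) (x2 k)
          (x3f (Function.update y30 jf b) k) (Function.update y0 jf a k)
          (Function.update y30 jf b k) else 1) (Finset.mem_univ jf)).symm
      have hR := (Finset.mul_prod_erase Finset.univ
        (fun k : Fin n => if k.val < j then
          ch.P (x1 k) (x2 k) (x3f y30 k) (y0 k) (y30 k) else 1) (Finset.mem_univ jf)).symm
      rw [hL, hR]
      have hjv : (if (jf : Fin n).val < j + 1 then ch.P (x1 jf) (x2 jf)
          (x3f (Function.update y30 jf b) jf) (Function.update y0 jf a jf)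
          (Function.update y30 jf b jf) else 1)
          = ch.P (x1 jf) (x2 jf) (x3f y30 jf) a b := by
        rw [if_pos (Nat.lt_succ_self j)]
        rw [Function.update_self, Function.update_self, hx3pre b jf (le_refl _)]
      have hjv' : (if (jf : Fin n).val < j then
          ch.P (x1 jf) (x2 jf) (x3f y30 jf) (y0 jf) (y30 jf) else 1) = 1 :=
        if_neg (lt_irrefl j)
      rw [hjv, hjv']
      have herase : (∏ k ∈ Finset.univ.erase jf, if k.val < j + 1 then ch.P (x1 k) (x2 k)
          (x3f (Function.update y30 jf b) k) (Function.update y0 jf a k)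
          (Function.update y30 jf b k) else 1)
          = ∏ k ∈ Finset.univ.erase jf, if k.val < j then
              ch.P (x1 k) (x2 k) (x3f y30 k) (y0 k) (y30 k) else 1 := by
        refine Finset.prod_congr rfl fun k hk => ?_
        have hkj : k ≠ jf := (Finset.mem_erase.1 hk).1
        have hkvj : k.val ≠ j := fun he => hkj (Fin.ext he)
        by_cases hlt : k.val < j
        · rw [if_pos (by omega), if_pos hlt]
          rw [Function.update_of_ne hkj, Function.update_of_ne hkj,
            hx3pre b k (le_of_lt hlt)]
        · rw [if_neg (by omega), if_neg hlt]
      rw [herase]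
      ring
    rw [Finset.sum_congr rfl fun a _ => Finset.sum_congr rfl fun b _ => split a b]
    simp_rw [← Finset.mul_sum]
    rw [ch.sum_one, mul_one]

lemma suffix_sum_one {n : ℕ} (ch : DMMARC X1 X2 X3 Y Y3) (x1 : Fin n → X1) (x2 : Fin n → X2)
    (x3f : (Fin n → Y3) → Fin n → X3)
    (hx3 : ∀ y3 y3' (k : Fin n), (∀ j : Fin n, j.val < k.val → y3 j = y3' j) →
      x3f y3 k = x3f y3' k)
    (i : Fin n) (y0 : Fin n → Y) (y30 : Fin n → Y3) (yv : Y) :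
    (∑ y : Fin n → Y, ∑ y3 : Fin n → Y3,
      if ((∀ k : Fin n, k.val < i.val → (y k = y0 k ∧ y3 k = y30 k)) ∧ y i = yv)
      then ∏ k, ch.P (x1 k) (x2 k) (x3f y3 k) (y k) (y3 k) else 0)
    = (∏ k : Fin n, (if k.val < i.val then
        ch.P (x1 k) (x2 k) (x3f y30 k) (y0 k) (y30 k) else 1))
      * ∑ b : Y3, ch.P (x1 i) (x2 i) (x3f y30 i) yv b := by
  have key : ∀ (y : Fin n → Y) (y3 : Fin n → Y3),
      (if ((∀ k : Fin n, k.val < i.val → (y k = y0 k ∧ y3 k = y30 k)) ∧ y i = yv)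
        then ∏ k, ch.P (x1 k) (x2 k) (x3f y3 k) (y k) (y3 k) else 0)
      = ∑ b : Y3,
        (if (∀ k : Fin n, k.val < i.val + 1 →
            (y k = Function.update y0 i yv k ∧ y3 k = Function.update y30 i b k))
          then ∏ k, ch.P (x1 k) (x2 k) (x3f y3 k) (y k) (y3 k) else 0) := by
    intro y y3
    rw [Finset.sum_eq_single (y3 i)]
    · refine (if_congr ?_ rfl rfl).symm
      constructor
      · intro hc
        constructor
        · intro k hk
          obtain ⟨h1, h2⟩ := hc k (by omega)
          have hkj : k ≠ i := by
            intro he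
            rw [he] at hk
            exact absurd hk (lt_irrefl _)
          rw [Function.update_of_ne hkj] at h1
          rw [Function.update_of_ne hkj] at h2
          exact ⟨h1, h2⟩
        · have h1 := (hc i (Nat.lt_succ_self _)).1
          rwa [Function.update_self] at h1
      · rintro ⟨hc, hyi⟩ k hk
        by_cases hkj : k = i
        · subst hkj
          rw [Function.update_self, Function.update_self]
          exact ⟨hyi, rfl⟩
        · have hkj' : k.val < i.val := by
            have hne : k.val ≠ i.val := fun he => hkj (Fin.ext he)
            omega
          rw [Function.update_of_ne hkj, Function.update_of_ne hkj]
          exact hc k hkj'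
    · intro b _ hb
      refine if_neg (fun hc => hb ?_)
      have h2 := (hc i (Nat.lt_succ_self _)).2
      rw [Function.update_self] at h2
      exact h2.symm
    · intro h; exact absurd (Finset.mem_univ _) h
  rw [Finset.sum_congr rfl fun y _ => Finset.sum_congr rfl fun y3 _ => key y y3]
  have swap3 : (∑ y : Fin n → Y, ∑ y3 : Fin n → Y3, ∑ b : Y3,
      (if (∀ k : Fin n, k.val < i.val + 1 →
          (y k = Function.update y0 i yv k ∧ y3 k = Function.update y30 i b k))
        then ∏ k, ch.P (x1 k) (x2 k) (x3f y3 k) (y k) (y3 k) else 0))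
      = ∑ b : Y3, ∑ y : Fin n → Y, ∑ y3 : Fin n → Y3,
      (if (∀ k : Fin n, k.val < i.val + 1 →
          (y k = Function.update y0 i yv k ∧ y3 k = Function.update y30 i b k))
        then ∏ k, ch.P (x1 k) (x2 k) (x3f y3 k) (y k) (y3 k) else 0) := by
    calc _ = ∑ y : Fin n → Y, ∑ b : Y3, ∑ y3 : Fin n → Y3, _ :=
        Finset.sum_congr rfl fun y _ => Finset.sum_comm
    _ = _ := Finset.sum_comm
  rw [swap3]
  rw [Finset.sum_congr rfl fun b _ =>
    suffix_sum ch x1 x2 x3f hx3 (n - (i.val + 1)) (i.val + 1) (by omega)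
      (Function.update y0 i yv) (Function.update y30 i b)]
  have hx3pre : ∀ (b : Y3) (k : Fin n), k.val ≤ i.val →
      x3f (Function.update y30 i b) k = x3f y30 k := by
    intro b k hk
    apply hx3
    intro j' hj'
    refine Function.update_of_ne ?_ _ _
    intro he
    have hje : (j' : ℕ) = i.val := by rw [he]
    omega
  have split : ∀ (b : Y3),
      (∏ k : Fin n, if k.val < i.val + 1 then ch.P (x1 k) (x2 k)
          (x3f (Function.update y30 i b) k) (Function.update y0 i yv k)
          (Function.update y30 i b k) else 1)
      = (∏ k : Fin n, if k.val < i.val then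
            ch.P (x1 k) (x2 k) (x3f y30 k) (y0 k) (y30 k) else 1)
        * ch.P (x1 i) (x2 i) (x3f y30 i) yv b := by
    intro b
    have hL := (Finset.mul_prod_erase Finset.univ
      (fun k : Fin n => if k.val < i.val + 1 then ch.P (x1 k) (x2 k)
        (x3f (Function.update y30 i b) k) (Function.update y0 i yv k)
        (Function.update y30 i b k) else 1) (Finset.mem_univ i)).symm
    have hR := (Finset.mul_prod_erase Finset.univ
      (fun k : Fin n => if k.val < i.val then
        ch.P (x1 k) (x2 k) (x3f y30 k) (y0 k) (y30 k) else 1) (Finset.mem_univ i)).symm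
    rw [hL, hR]
    have hjv : (if (i : Fin n).val < i.val + 1 then ch.P (x1 i) (x2 i)
        (x3f (Function.update y30 i b) i) (Function.update y0 i yv i)
        (Function.update y30 i b i) else 1)
        = ch.P (x1 i) (x2 i) (x3f y30 i) yv b := by
      rw [if_pos (Nat.lt_succ_self _)]
      rw [Function.update_self, Function.update_self, hx3pre b i (le_refl _)]
    have hjv' : (if (i : Fin n).val < i.val then
        ch.P (x1 i) (x2 i) (x3f y30 i) (y0 i) (y30 i) else 1) = 1 :=
      if_neg (lt_irrefl _)
    rw [hjv, hjv']
    have herase : (∏ k ∈ Finset.univ.erase i, if k.val < i.val + 1 then ch.P (x1 k) (x2 k)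
        (x3f (Function.update y30 i b) k) (Function.update y0 i yv k)
        (Function.update y30 i b k) else 1)
        = ∏ k ∈ Finset.univ.erase i, if k.val < i.val then
            ch.P (x1 k) (x2 k) (x3f y30 k) (y0 k) (y30 k) else 1 := by
      refine Finset.prod_congr rfl fun k hk => ?_
      have hkj : k ≠ i := (Finset.mem_erase.1 hk).1
      have hkvj : k.val ≠ i.val := fun he => hkj (Fin.ext he)
      by_cases hlt : k.val < i.val
      · rw [if_pos (by omega), if_pos hlt]
        rw [Function.update_of_ne hkj, Function.update_of_ne hkj,
          hx3pre b k (le_of_lt hlt)]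
      · rw [if_neg (by omega), if_neg hlt]
    rw [herase]
    ring
  rw [Finset.sum_congr rfl fun b _ => split b]
  rw [← Finset.mul_sum]

lemma relayIn_causal {S1 S2 W W3 : Type} {m n : ℕ}
    (c : MARCCode S1 S2 W W3 X1 X2 X3 Y Y3 m n) (w3 : Fin m → W3) :
    ∀ (y3 y3' : Fin n → Y3) (k : Fin n),
      (∀ j : Fin n, j.val < k.val → y3 j = y3' j) →
      relayIn c y3 w3 k = relayIn c y3' w3 k := by
  intro y3 y3' k h
  unfold relayIn
  congr 1
  funext j
  exact h ⟨j.val, j.isLt.trans k.isLt⟩ j.isLt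

end ChannelComp

section LawComp
variable {S1 S2 W W3 X1 X2 X3 Y Y3 : Type} {m n : ℕ}
  [Fintype S1] [Fintype S2] [Fintype W] [Fintype W3]
  [Fintype X1] [Fintype X2] [Fintype X3] [Fintype Y] [Fintype Y3]
  (src : SourcePMF (S1 × S2 × W × W3)) (ch : DMMARC X1 X2 X3 Y Y3)
  (c : MARCCode S1 S2 W W3 X1 X2 X3 Y Y3 m n)

lemma marcLaw_nonneg : ∀ ω, 0 ≤ marcLaw src ch c ω := by
  intro ω
  unfold marcLaw
  apply mul_nonneg
  · exact Finset.prod_nonneg fun i _ => src.nonneg _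
  · exact Finset.prod_nonneg fun k _ => ch.nonneg _ _ _ _ _

lemma marcLaw_prefix_sum (i : ℕ) (hi : i ≤ n) (σ0 : Fin m → S1 × S2 × W × W3)
    (y0 : Fin n → Y) (y30 : Fin n → Y3) :
    (∑ ω : (Fin m → S1 × S2 × W × W3) × (Fin n → Y) × (Fin n → Y3),
      if (ω.1 = σ0 ∧ ∀ j : Fin n, j.val < i → (ω.2.1 j = y0 j ∧ ω.2.2 j = y30 j))
      then marcLaw src ch c ω else 0)
    = (∏ jj, src.q (σ0 jj)) *
      ∏ k : Fin n, (if k.val < i then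
        ch.P (c.f1 (fun j => (σ0 j).1) k) (c.f2 (fun j => (σ0 j).2.1) k)
          (relayIn c y30 (fun j => (σ0 j).2.2.2) k) (y0 k) (y30 k) else 1) := by
  calc (∑ ω : (Fin m → S1 × S2 × W × W3) × (Fin n → Y) × (Fin n → Y3),
      if (ω.1 = σ0 ∧ ∀ j : Fin n, j.val < i → (ω.2.1 j = y0 j ∧ ω.2.2 j = y30 j))
      then marcLaw src ch c ω else 0)
      = ∑ σ : Fin m → S1 × S2 × W × W3, ∑ y : Fin n → Y, ∑ y3 : Fin n → Y3,
        (if (σ = σ0 ∧ ∀ j : Fin n, j.val < i → (y j = y0 j ∧ y3 j = y30 j))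
          then marcLaw src ch c (σ, y, y3) else 0) := by
        rw [Fintype.sum_prod_type]
        exact Finset.sum_congr rfl fun σ _ => Fintype.sum_prod_type
          (f := fun (p : (Fin n → Y) × (Fin n → Y3)) => if (σ = σ0 ∧ ∀ j : Fin n, j.val < i → (p.1 j = y0 j ∧ p.2 j = y30 j))
            then marcLaw src ch c (σ, p) else 0)
    _ = ∑ y : Fin n → Y, ∑ y3 : Fin n → Y3,
        (if (∀ j : Fin n, j.val < i → (y j = y0 j ∧ y3 j = y30 j))
          then marcLaw src ch c (σ0, y, y3) else 0) := by
        rw [Finset.sum_eq_single σ0]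
        · exact Finset.sum_congr rfl fun y _ => Finset.sum_congr rfl fun y3 _ =>
            if_congr (and_iff_right rfl) rfl rfl
        · intro σ _ hσ
          exact Finset.sum_eq_zero fun y _ => Finset.sum_eq_zero fun y3 _ =>
            if_neg (fun hc => hσ hc.1)
        · intro h; exact absurd (Finset.mem_univ _) h
    _ = ∑ y : Fin n → Y, ∑ y3 : Fin n → Y3, ((∏ jj, src.q (σ0 jj)) *
        (if (∀ j : Fin n, j.val < i → (y j = y0 j ∧ y3 j = y30 j))
          then ∏ k, ch.P (c.f1 (fun j => (σ0 j).1) k) (c.f2 (fun j => (σ0 j).2.1) k)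
            (relayIn c y3 (fun j => (σ0 j).2.2.2) k) (y k) (y3 k) else 0)) := by
        refine Finset.sum_congr rfl fun y _ => Finset.sum_congr rfl fun y3 _ => ?_
        by_cases hq : (∀ j : Fin n, j.val < i → (y j = y0 j ∧ y3 j = y30 j))
        · rw [if_pos hq, if_pos hq]
          rfl
        · rw [if_neg hq, if_neg hq, mul_zero]
    _ = (∏ jj, src.q (σ0 jj)) * ∑ y : Fin n → Y, ∑ y3 : Fin n → Y3,
        (if (∀ j : Fin n, j.val < i → (y j = y0 j ∧ y3 j = y30 j))
          then ∏ k, ch.P (c.f1 (fun j => (σ0 j).1) k) (c.f2 (fun j => (σ0 j).2.1) k)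
            (relayIn c y3 (fun j => (σ0 j).2.2.2) k) (y k) (y3 k) else 0) := by
        simp_rw [← Finset.mul_sum]
    _ = (∏ jj, src.q (σ0 jj)) *
        ∏ k : Fin n, (if k.val < i then
          ch.P (c.f1 (fun j => (σ0 j).1) k) (c.f2 (fun j => (σ0 j).2.1) k)
            (relayIn c y30 (fun j => (σ0 j).2.2.2) k) (y0 k) (y30 k) else 1) := by
        rw [suffix_sum ch (c.f1 (fun j => (σ0 j).1)) (c.f2 (fun j => (σ0 j).2.1))
          (fun y3 k => relayIn c y3 (fun j => (σ0 j).2.2.2) k)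
          (relayIn_causal c _) (n - i) i (by omega) y0 y30]

lemma marcLaw_prefix_yi_sum (i : Fin n) (σ0 : Fin m → S1 × S2 × W × W3)
    (y0 : Fin n → Y) (y30 : Fin n → Y3) (yv : Y) :
    (∑ ω : (Fin m → S1 × S2 × W × W3) × (Fin n → Y) × (Fin n → Y3),
      if (ω.1 = σ0 ∧ ((∀ j : Fin n, j.val < i.val → (ω.2.1 j = y0 j ∧ ω.2.2 j = y30 j))
          ∧ ω.2.1 i = yv))
      then marcLaw src ch c ω else 0)
    = ((∏ jj, src.q (σ0 jj)) *
      ∏ k : Fin n, (if k.val < i.val then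
        ch.P (c.f1 (fun j => (σ0 j).1) k) (c.f2 (fun j => (σ0 j).2.1) k)
          (relayIn c y30 (fun j => (σ0 j).2.2.2) k) (y0 k) (y30 k) else 1))
      * ∑ b : Y3, ch.P (c.f1 (fun j => (σ0 j).1) i) (c.f2 (fun j => (σ0 j).2.1) i)
          (relayIn c y30 (fun j => (σ0 j).2.2.2) i) yv b := by
  calc (∑ ω : (Fin m → S1 × S2 × W × W3) × (Fin n → Y) × (Fin n → Y3),
      if (ω.1 = σ0 ∧ ((∀ j : Fin n, j.val < i.val → (ω.2.1 j = y0 j ∧ ω.2.2 j = y30 j))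
          ∧ ω.2.1 i = yv))
      then marcLaw src ch c ω else 0)
      = ∑ σ : Fin m → S1 × S2 × W × W3, ∑ y : Fin n → Y, ∑ y3 : Fin n → Y3,
        (if (σ = σ0 ∧ ((∀ j : Fin n, j.val < i.val → (y j = y0 j ∧ y3 j = y30 j))
            ∧ y i = yv))
          then marcLaw src ch c (σ, y, y3) else 0) := by
        rw [Fintype.sum_prod_type]
        exact Finset.sum_congr rfl fun σ _ => Fintype.sum_prod_type
          (f := fun (p : (Fin n → Y) × (Fin n → Y3)) => if (σ = σ0 ∧ ((∀ j : Fin n, j.val < i.val →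
              (p.1 j = y0 j ∧ p.2 j = y30 j)) ∧ p.1 i = yv))
            then marcLaw src ch c (σ, p) else 0)
    _ = ∑ y : Fin n → Y, ∑ y3 : Fin n → Y3,
        (if ((∀ j : Fin n, j.val < i.val → (y j = y0 j ∧ y3 j = y30 j)) ∧ y i = yv)
          then marcLaw src ch c (σ0, y, y3) else 0) := by
        rw [Finset.sum_eq_single σ0]
        · exact Finset.sum_congr rfl fun y _ => Finset.sum_congr rfl fun y3 _ =>
            if_congr (and_iff_right rfl) rfl rfl
        · intro σ _ hσ
          exact Finset.sum_eq_zero fun y _ => Finset.sum_eq_zero fun y3 _ =>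
            if_neg (fun hc => hσ hc.1)
        · intro h; exact absurd (Finset.mem_univ _) h
    _ = ∑ y : Fin n → Y, ∑ y3 : Fin n → Y3, ((∏ jj, src.q (σ0 jj)) *
        (if ((∀ j : Fin n, j.val < i.val → (y j = y0 j ∧ y3 j = y30 j)) ∧ y i = yv)
          then ∏ k, ch.P (c.f1 (fun j => (σ0 j).1) k) (c.f2 (fun j => (σ0 j).2.1) k)
            (relayIn c y3 (fun j => (σ0 j).2.2.2) k) (y k) (y3 k) else 0)) := by
        refine Finset.sum_congr rfl fun y _ => Finset.sum_congr rfl fun y3 _ => ?_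
        by_cases hq : ((∀ j : Fin n, j.val < i.val → (y j = y0 j ∧ y3 j = y30 j)) ∧ y i = yv)
        · rw [if_pos hq, if_pos hq]
          rfl
        · rw [if_neg hq, if_neg hq, mul_zero]
    _ = (∏ jj, src.q (σ0 jj)) * ∑ y : Fin n → Y, ∑ y3 : Fin n → Y3,
        (if ((∀ j : Fin n, j.val < i.val → (y j = y0 j ∧ y3 j = y30 j)) ∧ y i = yv)
          then ∏ k, ch.P (c.f1 (fun j => (σ0 j).1) k) (c.f2 (fun j => (σ0 j).2.1) k)
            (relayIn c y3 (fun j => (σ0 j).2.2.2) k) (y k) (y3 k) else 0) := by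
        simp_rw [← Finset.mul_sum]
    _ = ((∏ jj, src.q (σ0 jj)) *
        ∏ k : Fin n, (if k.val < i.val then
          ch.P (c.f1 (fun j => (σ0 j).1) k) (c.f2 (fun j => (σ0 j).2.1) k)
            (relayIn c y30 (fun j => (σ0 j).2.2.2) k) (y0 k) (y30 k) else 1))
        * ∑ b : Y3, ch.P (c.f1 (fun j => (σ0 j).1) i) (c.f2 (fun j => (σ0 j).2.1) i)
            (relayIn c y30 (fun j => (σ0 j).2.2.2) i) yv b := by
        rw [suffix_sum_one ch (c.f1 (fun j => (σ0 j).1)) (c.f2 (fun j => (σ0 j).2.1))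
          (fun y3 k => relayIn c y3 (fun j => (σ0 j).2.2.2) k)
          (relayIn_causal c _) i y0 y30 yv]
        ring

end LawComp

section Prefixes
variable {S1 S2 W W3 X1 X2 X3 Y Y3 : Type} {m n : ℕ}

/-- Option-valued prefix of the destination outputs (length-uniform encoding of `Y^{<t}`). -/
def Ypre (t : ℕ) (ω : (Fin m → S1 × S2 × W × W3) × (Fin n → Y) × (Fin n → Y3)) :
    Fin n → Option Y := fun j => if j.val < t then some (ω.2.1 j) else none

/-- Option-valued prefix of the relay outputs. -/
def Y3pre (t : ℕ) (ω : (Fin m → S1 × S2 × W × W3) × (Fin n → Y) × (Fin n → Y3)) :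
    Fin n → Option Y3 := fun j => if j.val < t then some (ω.2.2 j) else none

lemma Ypre_eq_iff (t : ℕ) (ω ω' : (Fin m → S1 × S2 × W × W3) × (Fin n → Y) × (Fin n → Y3)) :
    Ypre t ω = Ypre t ω' ↔ ∀ j : Fin n, j.val < t → ω.2.1 j = ω'.2.1 j := by
  unfold Ypre
  constructor
  · intro h j hj
    have hc := congrFun h j
    rw [if_pos hj, if_pos hj] at hc
    exact Option.some.inj hc
  · intro h
    funext j
    by_cases hj : j.val < t
    · rw [if_pos hj, if_pos hj, h j hj]
    · rw [if_neg hj, if_neg hj]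

lemma Y3pre_eq_iff (t : ℕ) (ω ω' : (Fin m → S1 × S2 × W × W3) × (Fin n → Y) × (Fin n → Y3)) :
    Y3pre t ω = Y3pre t ω' ↔ ∀ j : Fin n, j.val < t → ω.2.2 j = ω'.2.2 j := by
  unfold Y3pre
  constructor
  · intro h j hj
    have hc := congrFun h j
    rw [if_pos hj, if_pos hj] at hc
    exact Option.some.inj hc
  · intro h
    funext j
    by_cases hj : j.val < t
    · rw [if_pos hj, if_pos hj, h j hj]
    · rw [if_neg hj, if_neg hj]

lemma Ypre_succ_iff (i : Fin n) (ω ω' : (Fin m → S1 × S2 × W × W3) × (Fin n → Y) × (Fin n → Y3)) :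
    Ypre (i.val + 1) ω = Ypre (i.val + 1) ω'
      ↔ (ω.2.1 i = ω'.2.1 i ∧ Ypre i.val ω = Ypre i.val ω') := by
  rw [Ypre_eq_iff, Ypre_eq_iff]
  constructor
  · intro h
    exact ⟨h i (Nat.lt_succ_self _), fun j hj => h j (by omega)⟩
  · rintro ⟨h1, h2⟩ j hj
    by_cases hji : j = i
    · subst hji; exact h1
    · refine h2 j ?_
      have hne : j.val ≠ i.val := fun he => hji (Fin.ext he)
      omega

lemma Ypre_zero_eq (ω ω' : (Fin m → S1 × S2 × W × W3) × (Fin n → Y) × (Fin n → Y3)) :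
    Ypre (0 : ℕ) ω = Ypre 0 ω' :=
  (Ypre_eq_iff 0 ω ω').2 (fun _ hj => absurd hj (Nat.not_lt_zero _))

lemma Ypre_top_iff (ω ω' : (Fin m → S1 × S2 × W × W3) × (Fin n → Y) × (Fin n → Y3)) :
    Ypre (n : ℕ) ω = Ypre n ω' ↔ ω.2.1 = ω'.2.1 := by
  rw [Ypre_eq_iff]
  constructor
  · intro h
    funext j
    exact h j j.isLt
  · intro h j _
    exact congrFun h j

end Prefixes

section FkDef
variable {S1 S2 W W3 X1 X2 X3 Y Y3 : Type} {m n : ℕ}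
  [Fintype S1] [Fintype S2] [Fintype W] [Fintype W3]
  [Fintype X1] [Fintype X2] [Fintype X3] [Fintype Y] [Fintype Y3]

/-- Conditional-entropy chain functional used in the telescoping argument. -/
def Fk (src : SourcePMF (S1 × S2 × W × W3)) (ch : DMMARC X1 X2 X3 Y Y3)
    (c : MARCCode S1 S2 W W3 X1 X2 X3 Y Y3 m n) (t : ℕ) : ℝ :=
  Hent (marcLaw src ch c) (fun ω => ((fun j => (ω.1 j).1, fun j => (ω.1 j).2.2.2),
      (Ypre t ω, (fun j => (ω.1 j).2.1, fun j => (ω.1 j).2.2.1))))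
  - Hent (marcLaw src ch c) (fun ω => (Ypre t ω, (fun j => (ω.1 j).2.1, fun j => (ω.1 j).2.2.1)))

end FkDef

section ChainIneq

variable {S1 S2 W W3 X1 X2 X3 Y Y3 : Type}
  [Fintype S1] [Fintype S2] [Fintype W] [Fintype W3]
  [Fintype X1] [Fintype X2] [Fintype X3] [Fintype Y] [Fintype Y3]

/-- Converse chain inequality for the individual destination bound
(key step in the proof of Proposition 1):
`∑_{i=1}^{n} I(X_{1,i},X_{3,i};Y_i|X_{2,i}) ≥ I(S1^m,W3^m;Y^n|S2^m,W^m)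
  ≥ H(S1^m|S2^m,W^m) − H(S1^m|Y^n,S2^m,W^m)`. -/
theorem marc_converse_chain_individual {m n : ℕ}
    (src : SourcePMF (S1 × S2 × W × W3)) (ch : DMMARC X1 X2 X3 Y Y3)
    (c : MARCCode S1 S2 W W3 X1 X2 X3 Y Y3 m n) :
    (∑ i : Fin n, condMutInfo (marcLaw src ch c)
        (fun ω => (c.f1 (fun j => (ω.1 j).1) i, relayIn c ω.2.2 (fun j => (ω.1 j).2.2.2) i))
        (fun ω => ω.2.1 i)
        (fun ω => c.f2 (fun j => (ω.1 j).2.1) i)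
      ≥ condMutInfo (marcLaw src ch c)
        (fun ω => (fun j => (ω.1 j).1, fun j => (ω.1 j).2.2.2))
        (fun ω => ω.2.1)
        (fun ω => (fun j => (ω.1 j).2.1, fun j => (ω.1 j).2.2.1)))
    ∧ (condMutInfo (marcLaw src ch c)
        (fun ω => (fun j => (ω.1 j).1, fun j => (ω.1 j).2.2.2))
        (fun ω => ω.2.1)
        (fun ω => (fun j => (ω.1 j).2.1, fun j => (ω.1 j).2.2.1))
      ≥ condEnt (marcLaw src ch c) (fun ω => fun j => (ω.1 j).1)
          (fun ω => (fun j => (ω.1 j).2.1, fun j => (ω.1 j).2.2.1))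
        - condEnt (marcLaw src ch c) (fun ω => fun j => (ω.1 j).1)
          (fun ω => (ω.2.1, fun j => (ω.1 j).2.1, fun j => (ω.1 j).2.2.1))) := by
  have hμnn := marcLaw_nonneg src ch c
  constructor
  · -- Part 1
    -- telescoping functional and per-letter bound
    have key1 : condMutInfo (marcLaw src ch c)
        (fun ω => (fun j => (ω.1 j).1, fun j => (ω.1 j).2.2.2))
        (fun ω => ω.2.1)
        (fun ω => (fun j => (ω.1 j).2.1, fun j => (ω.1 j).2.2.1))
        = Fk src ch c 0 - Fk src ch c n := by
      have c1 : Hent (marcLaw src ch c) (fun ω => (((fun j => (ω.1 j).1), (fun j => (ω.1 j).2.2.2)), ((fun j => (ω.1 j).2.1), (fun j => (ω.1 j).2.2.1))))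
          = Hent (marcLaw src ch c) (fun ω => (((fun j => (ω.1 j).1), (fun j => (ω.1 j).2.2.2)), (Ypre 0 ω, ((fun j => (ω.1 j).2.1), (fun j => (ω.1 j).2.2.1))))) := by
        apply Hent_congr
        intro ω ωp
        have h0 := Ypre_zero_eq ω ωp
        simp only [Prod.mk.injEq]
        tauto
      have c2 : Hent (marcLaw src ch c) (fun ω => ((fun j => (ω.1 j).2.1), (fun j => (ω.1 j).2.2.1)))
          = Hent (marcLaw src ch c) (fun ω => (Ypre 0 ω, ((fun j => (ω.1 j).2.1), (fun j => (ω.1 j).2.2.1)))) := by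
        apply Hent_congr
        intro ω ωp
        have h0 := Ypre_zero_eq ω ωp
        simp only [Prod.mk.injEq]
        tauto
      have c3 : Hent (marcLaw src ch c) (fun ω => (((fun j => (ω.1 j).1), (fun j => (ω.1 j).2.2.2)), (ω.2.1, ((fun j => (ω.1 j).2.1), (fun j => (ω.1 j).2.2.1)))))
          = Hent (marcLaw src ch c) (fun ω => (((fun j => (ω.1 j).1), (fun j => (ω.1 j).2.2.2)), (Ypre n ω, ((fun j => (ω.1 j).2.1), (fun j => (ω.1 j).2.2.1))))) := by
        apply Hent_congr
        intro ω ωp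
        have hn := Ypre_top_iff ω ωp
        simp only [Prod.mk.injEq]
        tauto
      have c4 : Hent (marcLaw src ch c) (fun ω => (ω.2.1, ((fun j => (ω.1 j).2.1), (fun j => (ω.1 j).2.2.1))))
          = Hent (marcLaw src ch c) (fun ω => (Ypre n ω, ((fun j => (ω.1 j).2.1), (fun j => (ω.1 j).2.2.1)))) := by
        apply Hent_congr
        intro ω ωp
        have hn := Ypre_top_iff ω ωp
        simp only [Prod.mk.injEq]
        tauto
      simp only [condMutInfo, condEnt, Fk]
      linarith [c1, c2, c3, c4]
    have key2 : Fk src ch c 0 - Fk src ch c n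
        = ∑ i : Fin n, (Fk src ch c i.val - Fk src ch c (i.val + 1)) := by
      rw [Fin.sum_univ_eq_sum_range (fun t => Fk src ch c t - Fk src ch c (t + 1)) n]
      exact (Finset.sum_range_sub' (Fk src ch c) n).symm
    have hstep : ∀ i : Fin n, Fk src ch c i.val - Fk src ch c (i.val + 1)
        ≤ condMutInfo (marcLaw src ch c)
          (fun ω => (c.f1 (fun j => (ω.1 j).1) i, relayIn c ω.2.2 (fun j => (ω.1 j).2.2.2) i))
          (fun ω => ω.2.1 i)
          (fun ω => c.f2 (fun j => (ω.1 j).2.1) i) := by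
      intro i
      -- chain-rule identity for the i-th term
      have d1 : Hent (marcLaw src ch c) (fun ω => (((fun j => (ω.1 j).1), (fun j => (ω.1 j).2.2.2)), (Ypre (i.val + 1) ω, ((fun j => (ω.1 j).2.1), (fun j => (ω.1 j).2.2.1)))))
          = Hent (marcLaw src ch c) (fun ω => (((fun j => (ω.1 j).1), (fun j => (ω.1 j).2.2.2)), (ω.2.1 i, (Ypre i.val ω, ((fun j => (ω.1 j).2.1), (fun j => (ω.1 j).2.2.1)))))) := by
        apply Hent_congr
        intro ω ωp
        have hs := Ypre_succ_iff i ω ωp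
        simp only [Prod.mk.injEq]
        tauto
      have d2 : Hent (marcLaw src ch c) (fun ω => (Ypre (i.val + 1) ω, ((fun j => (ω.1 j).2.1), (fun j => (ω.1 j).2.2.1))))
          = Hent (marcLaw src ch c) (fun ω => (ω.2.1 i, (Ypre i.val ω, ((fun j => (ω.1 j).2.1), (fun j => (ω.1 j).2.2.1))))) := by
        apply Hent_congr
        intro ω ωp
        have hs := Ypre_succ_iff i ω ωp
        simp only [Prod.mk.injEq]
        tauto
      have d3 : Hent (marcLaw src ch c) (fun ω => (((fun j => (ω.1 j).1), (fun j => (ω.1 j).2.2.2)), (ω.2.1 i, (Ypre i.val ω, ((fun j => (ω.1 j).2.1), (fun j => (ω.1 j).2.2.1))))))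
          = Hent (marcLaw src ch c) (fun ω => (ω.2.1 i, (((fun j => (ω.1 j).1), (fun j => (ω.1 j).2.2.2)), (Ypre i.val ω, ((fun j => (ω.1 j).2.1), (fun j => (ω.1 j).2.2.1)))))) := by
        apply Hent_congr
        intro ω ωp
        simp only [Prod.mk.injEq]
        tauto
      have sub1 : Fk src ch c i.val - Fk src ch c (i.val + 1)
          = condEnt (marcLaw src ch c) (fun ω => ω.2.1 i) (fun ω => (Ypre i.val ω, ((fun j => (ω.1 j).2.1), (fun j => (ω.1 j).2.2.1)))) - condEnt (marcLaw src ch c) (fun ω => ω.2.1 i) (fun ω => (((fun j => (ω.1 j).1), (fun j => (ω.1 j).2.2.2)), (Ypre i.val ω, ((fun j => (ω.1 j).2.1), (fun j => (ω.1 j).2.2.1))))) := by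
        simp only [Fk, condEnt]
        linarith [d1, d2, d3]
      -- (a) conditioning on less information
      have suba : condEnt (marcLaw src ch c) (fun ω => ω.2.1 i) (fun ω => (Ypre i.val ω, ((fun j => (ω.1 j).2.1), (fun j => (ω.1 j).2.2.1)))) ≤ condEnt (marcLaw src ch c) (fun ω => ω.2.1 i) (fun ω => c.f2 (fun j => (ω.1 j).2.1) i) := by
        refine condEnt_le_of_refines hμnn (fun ω => ω.2.1 i) (fun ω => c.f2 (fun j => (ω.1 j).2.1) i) (fun ω => (Ypre i.val ω, ((fun j => (ω.1 j).2.1), (fun j => (ω.1 j).2.2.1)))) ?_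
        intro ω ωp h
        have hz : (fun j => (ω.1 j).2.1) = (fun j => (ωp.1 j).2.1) :=
          congrArg (fun p => p.2.1) h
        exact congrArg (fun g => c.f2 g i) hz
      -- (b1) D refines (A, C)
      have subb1 : condEnt (marcLaw src ch c) (fun ω => ω.2.1 i) (fun ω => ((((fun j => (ω.1 j).1), (fun j => (ω.1 j).2.2.2)), (Ypre i.val ω, ((fun j => (ω.1 j).2.1), (fun j => (ω.1 j).2.2.1)))), Y3pre i.val ω)) ≤ condEnt (marcLaw src ch c) (fun ω => ω.2.1 i) (fun ω => (((fun j => (ω.1 j).1), (fun j => (ω.1 j).2.2.2)), (Ypre i.val ω, ((fun j => (ω.1 j).2.1), (fun j => (ω.1 j).2.2.1))))) :=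
        condEnt_le_of_refines hμnn (fun ω => ω.2.1 i) (fun ω => (((fun j => (ω.1 j).1), (fun j => (ω.1 j).2.2.2)), (Ypre i.val ω, ((fun j => (ω.1 j).2.1), (fun j => (ω.1 j).2.2.1))))) (fun ω => ((((fun j => (ω.1 j).1), (fun j => (ω.1 j).2.2.2)), (Ypre i.val ω, ((fun j => (ω.1 j).2.1), (fun j => (ω.1 j).2.2.1)))), Y3pre i.val ω)) (fun ω ωp h => congrArg Prod.fst h)
      -- (b2) Markov collapse
      have hDeq : ∀ (ω0 ωp : (Fin m → S1 × S2 × W × W3) × (Fin n → Y) × (Fin n → Y3)),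
          (((((fun j => (ωp.1 j).1), (fun j => (ωp.1 j).2.2.2)), (Ypre i.val ωp, ((fun j => (ωp.1 j).2.1), (fun j => (ωp.1 j).2.2.1)))), Y3pre i.val ωp)
            = ((((fun j => (ω0.1 j).1), (fun j => (ω0.1 j).2.2.2)), (Ypre i.val ω0, ((fun j => (ω0.1 j).2.1), (fun j => (ω0.1 j).2.2.1)))), Y3pre i.val ω0))
          ↔ (ωp.1 = ω0.1 ∧ (∀ j : Fin n, j.val < i.val → (ωp.2.1 j = ω0.2.1 j ∧ ωp.2.2 j = ω0.2.2 j))) := by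
        intro ω0 ωp
        constructor
        · intro h
          have hA1 : (fun j => (ωp.1 j).1) = (fun j => (ω0.1 j).1) :=
            congrArg (fun p => p.1.1.1) h
          have hA2 : (fun j => (ωp.1 j).2.2.2) = (fun j => (ω0.1 j).2.2.2) :=
            congrArg (fun p => p.1.1.2) h
          have hYp : Ypre i.val ωp = Ypre i.val ω0 := congrArg (fun p => p.1.2.1) h
          have hS2 : (fun j => (ωp.1 j).2.1) = (fun j => (ω0.1 j).2.1) :=
            congrArg (fun p => p.1.2.2.1) h
          have hW : (fun j => (ωp.1 j).2.2.1) = (fun j => (ω0.1 j).2.2.1) :=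
            congrArg (fun p => p.1.2.2.2) h
          have hY3p : Y3pre i.val ωp = Y3pre i.val ω0 := congrArg (fun p => p.2) h
          refine ⟨funext fun j => ?_, fun j hj =>
            ⟨(Ypre_eq_iff i.val ωp ω0).1 hYp j hj, (Y3pre_eq_iff i.val ωp ω0).1 hY3p j hj⟩⟩
          exact Prod.ext (congrFun hA1 j) (Prod.ext (congrFun hS2 j)
            (Prod.ext (congrFun hW j) (congrFun hA2 j)))
        · rintro ⟨h1, h2⟩
          have hY : Ypre i.val ωp = Ypre i.val ω0 :=
            (Ypre_eq_iff i.val ωp ω0).2 (fun j hj => (h2 j hj).1)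
          have hY3 : Y3pre i.val ωp = Y3pre i.val ω0 :=
            (Y3pre_eq_iff i.val ωp ω0).2 (fun j hj => (h2 j hj).2)
          rw [h1, hY, hY3]
      have hdet : ∀ (ω ωp : (Fin m → S1 × S2 × W × W3) × (Fin n → Y) × (Fin n → Y3)),
          ((((fun j => (ω.1 j).1), (fun j => (ω.1 j).2.2.2)), (Ypre i.val ω, ((fun j => (ω.1 j).2.1), (fun j => (ω.1 j).2.2.1)))), Y3pre i.val ω) = ((((fun j => (ωp.1 j).1), (fun j => (ωp.1 j).2.2.2)), (Ypre i.val ωp, ((fun j => (ωp.1 j).2.1), (fun j => (ωp.1 j).2.2.1)))), Y3pre i.val ωp)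
          → ((c.f1 (fun j => (ω.1 j).1) i, relayIn c ω.2.2 (fun j => (ω.1 j).2.2.2) i), c.f2 (fun j => (ω.1 j).2.1) i) = ((c.f1 (fun j => (ωp.1 j).1) i, relayIn c ωp.2.2 (fun j => (ωp.1 j).2.2.2) i), c.f2 (fun j => (ωp.1 j).2.1) i) := by
        intro ω ωp h
        obtain ⟨hσ, hpre⟩ := (hDeq ωp ω).1 h
        have hX1 : c.f1 (fun j => (ω.1 j).1) i = c.f1 (fun j => (ωp.1 j).1) i := by rw [hσ]
        have hX2 : c.f2 (fun j => (ω.1 j).2.1) i = c.f2 (fun j => (ωp.1 j).2.1) i := by rw [hσ]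
        have hX3 : relayIn c ω.2.2 (fun j => (ω.1 j).2.2.2) i = relayIn c ωp.2.2 (fun j => (ωp.1 j).2.2.2) i := by
          unfold relayIn
          have hrestr : (fun j : Fin i.val => ω.2.2 ⟨j.val, j.isLt.trans i.isLt⟩)
              = (fun j : Fin i.val => ωp.2.2 ⟨j.val, j.isLt.trans i.isLt⟩) :=
            funext fun j => (hpre ⟨j.val, j.isLt.trans i.isLt⟩ j.isLt).2
          rw [hrestr, hσ]
        rw [hX1, hX2, hX3]
      have hfac : ∀ (ω0 : (Fin m → S1 × S2 × W × W3) × (Fin n → Y) × (Fin n → Y3)) (y : Y),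
          pr (marcLaw src ch c) (fun ωp => (ωp.2.1 i, ((((fun j => (ωp.1 j).1), (fun j => (ωp.1 j).2.2.2)), (Ypre i.val ωp, ((fun j => (ωp.1 j).2.1), (fun j => (ωp.1 j).2.2.1)))), Y3pre i.val ωp)))
            (y, ((((fun j => (ω0.1 j).1), (fun j => (ω0.1 j).2.2.2)), (Ypre i.val ω0, ((fun j => (ω0.1 j).2.1), (fun j => (ω0.1 j).2.2.1)))), Y3pre i.val ω0))
          = (∑ b : Y3, ch.P (c.f1 (fun j => (ω0.1 j).1) i) (c.f2 (fun j => (ω0.1 j).2.1) i)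
              (relayIn c ω0.2.2 (fun j => (ω0.1 j).2.2.2) i) y b)
            * pr (marcLaw src ch c) (fun ωp => ((((fun j => (ωp.1 j).1), (fun j => (ωp.1 j).2.2.2)), (Ypre i.val ωp, ((fun j => (ωp.1 j).2.1), (fun j => (ωp.1 j).2.2.1)))), Y3pre i.val ωp))
              (((((fun j => (ω0.1 j).1), (fun j => (ω0.1 j).2.2.2)), (Ypre i.val ω0, ((fun j => (ω0.1 j).2.1), (fun j => (ω0.1 j).2.2.1)))), Y3pre i.val ω0)) := by
        intro ω0 y
        have e1 : pr (marcLaw src ch c) (fun ωp => (ωp.2.1 i, ((((fun j => (ωp.1 j).1), (fun j => (ωp.1 j).2.2.2)), (Ypre i.val ωp, ((fun j => (ωp.1 j).2.1), (fun j => (ωp.1 j).2.2.1)))), Y3pre i.val ωp)))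
            (y, ((((fun j => (ω0.1 j).1), (fun j => (ω0.1 j).2.2.2)), (Ypre i.val ω0, ((fun j => (ω0.1 j).2.1), (fun j => (ω0.1 j).2.2.1)))), Y3pre i.val ω0))
            = ∑ ωp : (Fin m → S1 × S2 × W × W3) × (Fin n → Y) × (Fin n → Y3),
              if (ωp.1 = ω0.1 ∧ ((∀ j : Fin n, j.val < i.val → (ωp.2.1 j = ω0.2.1 j ∧ ωp.2.2 j = ω0.2.2 j)) ∧ ωp.2.1 i = y))
              then marcLaw src ch c ωp else 0 := by
          unfold pr
          refine Finset.sum_congr rfl fun ωp _ => ?_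
          by_cases hC : (ωp.1 = ω0.1 ∧ ((∀ j : Fin n, j.val < i.val → (ωp.2.1 j = ω0.2.1 j ∧ ωp.2.2 j = ω0.2.2 j)) ∧ ωp.2.1 i = y))
          · refine (if_pos ?_).trans (if_pos hC).symm
            obtain ⟨ha, hb, hcv⟩ := hC
            have h2 := (hDeq ω0 ωp).2 ⟨ha, hb⟩
            show (ωp.2.1 i, ((((fun j => (ωp.1 j).1), (fun j => (ωp.1 j).2.2.2)), (Ypre i.val ωp, ((fun j => (ωp.1 j).2.1), (fun j => (ωp.1 j).2.2.1)))), Y3pre i.val ωp))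
              = (y, ((((fun j => (ω0.1 j).1), (fun j => (ω0.1 j).2.2.2)), (Ypre i.val ω0, ((fun j => (ω0.1 j).2.1), (fun j => (ω0.1 j).2.2.1)))), Y3pre i.val ω0))
            rw [hcv, h2]
          · refine (if_neg ?_).trans (if_neg hC).symm
            intro hc
            apply hC
            have hc' : (ωp.2.1 i, ((((fun j => (ωp.1 j).1), (fun j => (ωp.1 j).2.2.2)), (Ypre i.val ωp, ((fun j => (ωp.1 j).2.1), (fun j => (ωp.1 j).2.2.1)))), Y3pre i.val ωp))
                = (y, ((((fun j => (ω0.1 j).1), (fun j => (ω0.1 j).2.2.2)), (Ypre i.val ω0, ((fun j => (ω0.1 j).2.1), (fun j => (ω0.1 j).2.2.1)))), Y3pre i.val ω0)) := hc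
            have h1 : ωp.2.1 i = y := congrArg Prod.fst hc'
            have h2 := (hDeq ω0 ωp).1 (congrArg Prod.snd hc')
            exact ⟨h2.1, h2.2, h1⟩
        have e2 : pr (marcLaw src ch c) (fun ωp => ((((fun j => (ωp.1 j).1), (fun j => (ωp.1 j).2.2.2)), (Ypre i.val ωp, ((fun j => (ωp.1 j).2.1), (fun j => (ωp.1 j).2.2.1)))), Y3pre i.val ωp))
            (((((fun j => (ω0.1 j).1), (fun j => (ω0.1 j).2.2.2)), (Ypre i.val ω0, ((fun j => (ω0.1 j).2.1), (fun j => (ω0.1 j).2.2.1)))), Y3pre i.val ω0))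
            = ∑ ωp : (Fin m → S1 × S2 × W × W3) × (Fin n → Y) × (Fin n → Y3),
              if (ωp.1 = ω0.1 ∧ ∀ j : Fin n, j.val < i.val →
                  (ωp.2.1 j = ω0.2.1 j ∧ ωp.2.2 j = ω0.2.2 j))
              then marcLaw src ch c ωp else 0 := by
          unfold pr
          refine Finset.sum_congr rfl fun ωp _ => ?_
          by_cases hC : (ωp.1 = ω0.1 ∧ (∀ j : Fin n, j.val < i.val → (ωp.2.1 j = ω0.2.1 j ∧ ωp.2.2 j = ω0.2.2 j)))
          · exact (if_pos ((hDeq ω0 ωp).2 hC)).trans (if_pos hC).symm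
          · exact (if_neg (fun hc => hC ((hDeq ω0 ωp).1 hc))).trans (if_neg hC).symm
        rw [e1, e2, marcLaw_prefix_yi_sum src ch c i ω0.1 ω0.2.1 ω0.2.2 y,
          marcLaw_prefix_sum src ch c i.val (le_of_lt i.isLt) ω0.1 ω0.2.1 ω0.2.2]
        ring
      have subb2 : condEnt (marcLaw src ch c) (fun ω => ω.2.1 i) (fun ω => ((((fun j => (ω.1 j).1), (fun j => (ω.1 j).2.2.2)), (Ypre i.val ω, ((fun j => (ω.1 j).2.1), (fun j => (ω.1 j).2.2.1)))), Y3pre i.val ω)) = condEnt (marcLaw src ch c) (fun ω => ω.2.1 i) (fun ω => ((c.f1 (fun j => (ω.1 j).1) i, relayIn c ω.2.2 (fun j => (ω.1 j).2.2.2) i), c.f2 (fun j => (ω.1 j).2.1) i)) :=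
        condEnt_collapse hμnn (fun ω => ω.2.1 i) (fun ω => ((((fun j => (ω.1 j).1), (fun j => (ω.1 j).2.2.2)), (Ypre i.val ω, ((fun j => (ω.1 j).2.1), (fun j => (ω.1 j).2.2.1)))), Y3pre i.val ω)) (fun ω => ((c.f1 (fun j => (ω.1 j).1) i, relayIn c ω.2.2 (fun j => (ω.1 j).2.2.2) i), c.f2 (fun j => (ω.1 j).2.1) i)) (fun (y : Y) (t : (X1 × X3) × X2) => ∑ b : Y3, ch.P t.1.1 t.2 t.1.2 y b) hdet hfac
      have hcomm : condMutInfo (marcLaw src ch c)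
          (fun ω => (c.f1 (fun j => (ω.1 j).1) i, relayIn c ω.2.2 (fun j => (ω.1 j).2.2.2) i))
          (fun ω => ω.2.1 i)
          (fun ω => c.f2 (fun j => (ω.1 j).2.1) i)
          = condEnt (marcLaw src ch c) (fun ω => ω.2.1 i) (fun ω => c.f2 (fun j => (ω.1 j).2.1) i) - condEnt (marcLaw src ch c) (fun ω => ω.2.1 i) (fun ω => ((c.f1 (fun j => (ω.1 j).1) i, relayIn c ω.2.2 (fun j => (ω.1 j).2.2.2) i), c.f2 (fun j => (ω.1 j).2.1) i)) := by
        rw [condMutInfo_comm]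
        rfl
      rw [sub1, hcomm]
      linarith [suba, subb1, subb2]
    rw [ge_iff_le, key1, key2]
    exact Finset.sum_le_sum fun i _ => hstep i
  · -- Part 2
    have hnn := condMutInfo_nonneg hμnn
      (fun ω : (Fin m → S1 × S2 × W × W3) × (Fin n → Y) × (Fin n → Y3) =>
        (fun j => (ω.1 j).2.2.2))
      (fun ω => ω.2.1)
      (fun ω => ((fun j => (ω.1 j).1),
        ((fun j => (ω.1 j).2.1), (fun j => (ω.1 j).2.2.1))))
    have e1 : Hent (marcLaw src ch c)
        (fun ω => ((fun j => (ω.1 j).1, fun j => (ω.1 j).2.2.2),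
          (fun j => (ω.1 j).2.1, fun j => (ω.1 j).2.2.1)))
        = Hent (marcLaw src ch c)
        (fun ω => ((fun j => (ω.1 j).2.2.2),
          ((fun j => (ω.1 j).1), ((fun j => (ω.1 j).2.1), (fun j => (ω.1 j).2.2.1))))) := by
      apply Hent_congr
      intro ω ω'
      simp only [Prod.mk.injEq]
      tauto
    have e2 : Hent (marcLaw src ch c)
        (fun ω => ((fun j => (ω.1 j).1, fun j => (ω.1 j).2.2.2),
          (ω.2.1, (fun j => (ω.1 j).2.1, fun j => (ω.1 j).2.2.1))))
        = Hent (marcLaw src ch c)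
        (fun ω => ((fun j => (ω.1 j).2.2.2),
          (ω.2.1, ((fun j => (ω.1 j).1), ((fun j => (ω.1 j).2.1), (fun j => (ω.1 j).2.2.1)))))) := by
      apply Hent_congr
      intro ω ω'
      simp only [Prod.mk.injEq]
      tauto
    have e3 : Hent (marcLaw src ch c)
        (fun ω => ((fun j => (ω.1 j).1),
          (ω.2.1, (fun j => (ω.1 j).2.1, fun j => (ω.1 j).2.2.1))))
        = Hent (marcLaw src ch c)
        (fun ω => (ω.2.1, ((fun j => (ω.1 j).1), ((fun j => (ω.1 j).2.1), (fun j => (ω.1 j).2.2.1))))) := by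
      apply Hent_congr
      intro ω ω'
      simp only [Prod.mk.injEq]
      tauto
    simp only [condMutInfo, condEnt, ge_iff_le] at hnn ⊢
    linarith [hnn, e1, e2, e3]

end ChainIneq

end Paper
end
end
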